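/- arXiv:1806.02553 — 6 statements merged into one kernel-verified Lean document; each statement's English description precedes it below -/
import Mathlib

section
/- There exists a constant K ≥ 1 (one may take Grothendieck's constant K_G) such that for every real number p with 2 ≤ p < ∞, every Banach lattice X, every bounded linear operator T : ℓ_p → X, every m ∈ ℕ and all real scalars λ_1, …, λ_m, one has ‖∑_{i=1}^m λ_i |T e_i|‖_X ≤ K · ‖T‖ · (∑_{i=1}^m |λ_i|^r)^{1/r}, where r is determined by 1/r = 1/2 + 1/p and e_i denotes the i-th canonical basis vector of ℓ_p. -/
/-! Auxiliary material for the proof: we prove an elementary route to the estimate,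
via a scalar Khintchine inequality (with constant `√3`, from the 4th-moment method)
and a finite-dimensional separation (zonotope) argument transferring scalar lattice
inequalities into an arbitrary Banach lattice. -/

section LatticeSmul

variable {X : Type*} [Lattice X] [AddCommGroup X] [CovariantClass X X (· + ·) (· ≤ ·)]

private lemma fbl_nonneg_of_double (h : X) (hh : 0 ≤ h + h) : 0 ≤ h := by
  have h1 : -h ≤ h := by rwa [neg_le_iff_add_nonneg]
  have h2 : h⁻ ≤ h⁺ := by
    rw [negPart_def, posPart_def]
    exact sup_le (le_sup_of_le_left h1) le_sup_right
  have h3 : h⁻ = 0 := le_antisymm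
    (by simpa [inf_eq_right.mpr h2] using (posPart_inf_negPart_eq_zero h).le)
    (negPart_nonneg h)
  have h4 := posPart_sub_negPart h
  rw [h3, sub_zero] at h4
  rw [← h4]; exact posPart_nonneg h

end LatticeSmul

section NormedLattice

variable {X : Type*} [NormedAddCommGroup X] [Lattice X] [HasSolidNorm X]
  [IsOrderedAddMonoid X] [NormedSpace ℝ X]

private lemma fbl_half_smul_nonneg (x : X) (hx : 0 ≤ x) : 0 ≤ (2⁻¹ : ℝ) • x := by
  apply fbl_nonneg_of_double
  have h : (2⁻¹ : ℝ) • x + (2⁻¹ : ℝ) • x = x := by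
    rw [← add_smul]; norm_num
  rwa [h]

private lemma fbl_dyadic_smul_nonneg (x : X) (hx : 0 ≤ x) (k n : ℕ) :
    0 ≤ ((k : ℝ) / 2 ^ n) • x := by
  induction n with
  | zero => simpa [Nat.cast_smul_eq_nsmul] using nsmul_nonneg hx k
  | succ n ih =>
      have h : ((k : ℝ) / 2 ^ (n + 1)) • x = (2⁻¹ : ℝ) • (((k : ℝ) / 2 ^ n) • x) := by
        rw [smul_smul]; ring_nf
      rw [h]
      exact fbl_half_smul_nonneg _ ih

/-- Scalar multiplication by a nonnegative real preserves positivity in a normed lattice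
(with an a priori unrelated `NormedSpace ℝ` structure): via dyadic approximation and
closedness of the positive cone. -/
private lemma fbl_real_smul_nonneg (c : ℝ) (hc : 0 ≤ c) (x : X) (hx : 0 ≤ x) :
    0 ≤ c • x := by
  have hclosed : IsClosed {y : X | 0 ≤ y} := isClosed_nonneg
  have h1 : Filter.Tendsto (fun n : ℕ => ((⌊c * 2 ^ n⌋₊ : ℝ) / 2 ^ n)) Filter.atTop
      (nhds c) :=
    (tendsto_nat_floor_mul_div_atTop hc).comp
      (tendsto_pow_atTop_atTop_of_one_lt (by norm_num : (1 : ℝ) < 2))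
  have htend : Filter.Tendsto (fun n : ℕ => ((⌊c * 2 ^ n⌋₊ : ℝ) / 2 ^ n) • x) Filter.atTop
      (nhds (c • x)) := h1.smul tendsto_const_nhds
  exact hclosed.mem_of_tendsto htend
    (Filter.Eventually.of_forall fun n => fbl_dyadic_smul_nonneg x hx _ n)

private lemma fbl_real_smul_mono {c : ℝ} (hc : 0 ≤ c) {a b : X} (hab : a ≤ b) :
    c • a ≤ c • b := by
  have h := fbl_real_smul_nonneg c hc (b - a) (sub_nonneg.mpr hab)
  rw [smul_sub, sub_nonneg] at h; exact h

private lemma fbl_abs_real_smul_le {d : ℝ} (hd : 0 ≤ d) (z : X) : |d • z| ≤ d • |z| := by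
  refine sup_le ?_ ?_
  · exact fbl_real_smul_mono hd (le_abs_self z)
  · rw [← smul_neg]
    have h : -z ≤ |z| := le_sup_right
    exact fbl_real_smul_mono hd h

private lemma fbl_real_smul_abs {c : ℝ} (hc : 0 ≤ c) (y : X) : c • |y| = |c • y| := by
  rcases eq_or_lt_of_le hc with rfl | hpos
  · simp
  · refine le_antisymm ?_ (fbl_abs_real_smul_le hc y)
    have h := fbl_abs_real_smul_le (le_of_lt (inv_pos.mpr hpos)) (c • y)
    rw [smul_smul, inv_mul_cancel₀ (ne_of_gt hpos), one_smul] at h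
    have h2 := fbl_real_smul_mono hc h
    rwa [smul_smul, mul_inv_cancel₀ (ne_of_gt hpos), one_smul] at h2

private lemma fbl_real_smul_le_abs_smul (u : ℝ) (z : X) : u • z ≤ |u| • |z| := by
  rcases le_or_gt 0 u with hu | hu
  · rw [abs_of_nonneg hu]; exact fbl_real_smul_mono hu (le_abs_self z)
  · rw [abs_of_neg hu]
    have h : u • z = (-u) • (-z) := by rw [neg_smul, smul_neg, neg_neg]
    rw [h]
    have h2 : -z ≤ |z| := le_sup_right
    exact fbl_real_smul_mono (by linarith) h2

/-- Transfer: if all `±`-sign combinations `∑ ±cᵢ • yᵢ` lie below `B`, then so does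
`∑ cᵢ • |yᵢ|` (for nonnegative `cᵢ`). -/
private lemma fbl_transfer_aux : ∀ (m : ℕ) (c : Fin m → ℝ), (∀ i, 0 ≤ c i) →
    ∀ (y : Fin m → X) (B : X),
    (∀ δ : Fin m → Bool, ∑ i, (if δ i then c i else -c i) • y i ≤ B) →
    ∑ i, c i • |y i| ≤ B := by
  intro m
  induction m with
  | zero => intro c _ y B H; simpa using H (fun _ => true)
  | succ n ih =>
      intro c hc y B H
      rw [Fin.sum_univ_succ]
      have key : ∀ δ' : Fin n → Bool,
          ∑ i : Fin n, (if δ' i then c i.succ else -c i.succ) • y i.succ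
            ≤ B - c 0 • |y 0| := by
        intro δ'
        set S := ∑ i : Fin n, (if δ' i then c i.succ else -c i.succ) • y i.succ with hS
        have h1 := H (Fin.cons true δ')
        have h2 := H (Fin.cons false δ')
        rw [Fin.sum_univ_succ] at h1 h2
        simp only [Fin.cons_zero, Fin.cons_succ, if_true, if_false] at h1 h2
        rw [← hS] at h1 h2
        have habs : c 0 • |y 0| + S ≤ B := by
          have he : c 0 • |y 0| = (c 0 • y 0) ⊔ ((-c 0) • y 0) := by
            rw [fbl_real_smul_abs (hc 0), neg_smul]; rfl
          rw [he, sup_add]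
          exact sup_le h1 h2
        rwa [le_sub_iff_add_le, add_comm]
      have hrec := ih (fun i => c i.succ) (fun i => hc i.succ) (fun i => y i.succ) _ key
      calc c 0 • |y 0| + ∑ i : Fin n, c i.succ • |y i.succ|
          ≤ c 0 • |y 0| + (B - c 0 • |y 0|) := add_le_add (le_refl _) hrec
        _ = B := by abel

end NormedLattice

section Separation

private lemma fbl_linfunc_eq_sum {m : ℕ} (f : (Fin m → ℝ) →L[ℝ] ℝ) (v : Fin m → ℝ) :
    f v = ∑ i, v i * f (Pi.single i 1) := by
  have hv : v = ∑ i, (v i) • (Pi.single (M := fun _ : Fin m => ℝ) i (1 : ℝ)) := by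
    funext k
    simp [Finset.sum_apply, Pi.single_apply]
  conv_lhs => rw [hv]
  rw [map_sum]
  congr 1; funext i
  rw [map_smul]; simp [smul_eq_mul]

/-- Finite-dimensional separation: a linear functional dominated by a weighted sum of
absolute values of linear functionals lies in the corresponding zonotope. -/
private lemma fbl_zonotope_mem {m : ℕ} {J : Type*} [Fintype J] (w : J → ℝ)
    (hw : ∀ j, 0 ≤ w j) (a : J → (Fin m → ℝ)) (c : Fin m → ℝ)
    (hdom : ∀ t : Fin m → ℝ, (∑ i, c i * t i) ≤ ∑ j, w j * |∑ i, a j i * t i|) :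
    ∃ u : J → ℝ, (∀ j, |u j| ≤ w j) ∧ ∀ i, c i = ∑ j, u j * a j i := by
  classical
  set box : Set (J → ℝ) := Set.univ.pi (fun j => Set.Icc (-(w j)) (w j)) with hbox
  set Φ : (J → ℝ) → (Fin m → ℝ) := fun u => ∑ j, u j • a j with hΦ
  set Z : Set (Fin m → ℝ) := Φ '' box with hZ
  have hΦlin : IsLinearMap ℝ Φ := by
    constructor
    · intro u v; simp only [hΦ, Pi.add_apply, add_smul, Finset.sum_add_distrib]
    · intro r u; simp only [hΦ, Pi.smul_apply, smul_assoc, Finset.smul_sum]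
  have hconv : Convex ℝ Z := by
    apply Convex.is_linear_image _ hΦlin
    exact convex_pi (fun j _ => convex_Icc _ _)
  have hcompact : IsCompact Z := by
    apply IsCompact.image
    · exact isCompact_univ_pi (fun j => isCompact_Icc)
    · exact LinearMap.continuous_of_finiteDimensional (hΦlin.mk' Φ)
  have hclosed : IsClosed Z := hcompact.isClosed
  have hmem : c ∈ Z := by
    by_contra hc
    obtain ⟨f, u₀, hfZ, hfc⟩ := geometric_hahn_banach_closed_point hconv hclosed hc
    set t : Fin m → ℝ := fun i => f (Pi.single i 1) with ht
    set u : J → ℝ := fun j => if 0 ≤ f (a j) then w j else -(w j) with hu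
    have huZ : Φ u ∈ Z := ⟨u, fun j _ => by
      by_cases h : 0 ≤ f (a j) <;> simp [hu, h, Set.mem_Icc, neg_le_self (hw j), hw j,
        neg_le_neg_iff, le_refl], rfl⟩
    have hfu : f (Φ u) = ∑ j, w j * |f (a j)| := by
      rw [hΦ]
      simp only [map_sum, map_smul, smul_eq_mul]
      congr 1; funext j
      by_cases h : 0 ≤ f (a j)
      · simp [hu, h, abs_of_nonneg h]
      · rw [abs_of_neg (lt_of_not_ge h)]; simp only [hu, if_neg h]; ring
    have hfaj : ∀ j, f (a j) = ∑ i, a j i * t i := fun j => fbl_linfunc_eq_sum f (a j)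
    have hfcval : f c = ∑ i, c i * t i := fbl_linfunc_eq_sum f c
    have hle : f c ≤ f (Φ u) := by
      rw [hfu, hfcval]
      calc ∑ i, c i * t i ≤ ∑ j, w j * |∑ i, a j i * t i| := hdom t
        _ = ∑ j, w j * |f (a j)| := by congr 1; funext j; rw [hfaj j]
    exact absurd (lt_trans (hfZ _ huZ) hfc) (not_lt.mpr hle)
  obtain ⟨u, hubox, hueq⟩ := hmem
  refine ⟨u, fun j => ?_, fun i => ?_⟩
  · have h := hubox j (Set.mem_univ j)
    rw [Set.mem_Icc] at h
    exact abs_le.mpr ⟨h.1, h.2⟩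
  · have h := congrFun hueq i
    rw [hΦ] at h
    simp only [Finset.sum_apply, Pi.smul_apply, smul_eq_mul] at h
    exact h.symm

end Separation

section Khintchine

/-- The sign `±1` attached to a boolean. -/
noncomputable def fblSg (b : Bool) : ℝ := if b then 1 else -1

private lemma fbl_sum_bool_succ {m : ℕ} (F : (Fin (m + 1) → Bool) → ℝ) :
    ∑ σ : Fin (m + 1) → Bool, F σ
      = ∑ τ : Fin m → Bool, (F (Fin.cons true τ) + F (Fin.cons false τ)) := by
  have h1 : ∑ σ : Fin (m + 1) → Bool, F σ
      = ∑ p : Bool × (Fin m → Bool), F (Fin.cons p.1 p.2) :=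
    (Fintype.sum_equiv (Fin.consEquiv (fun _ => Bool)) _ _ (fun p => rfl)).symm
  rw [h1, Fintype.sum_prod_type_right]
  congr 1; funext τ
  simp [Fintype.sum_bool]

private lemma fbl_moment2 : ∀ (m : ℕ) (s : Fin m → ℝ),
    ∑ σ : Fin m → Bool, (∑ i, fblSg (σ i) * s i) ^ 2 = 2 ^ m * ∑ i, (s i) ^ 2 := by
  intro m
  induction m with
  | zero => intro s; simp
  | succ n ih =>
      intro s
      rw [fbl_sum_bool_succ (fun σ => (∑ i, fblSg (σ i) * s i) ^ 2)]
      have hsplit : ∀ (b : Bool) (τ : Fin n → Bool),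
          (∑ i : Fin (n + 1), fblSg ((Fin.cons b τ : Fin (n + 1) → Bool) i) * s i)
            = fblSg b * s 0 + ∑ i : Fin n, fblSg (τ i) * s i.succ := by
        intro b τ
        rw [Fin.sum_univ_succ]
        simp [Fin.cons_succ, Fin.cons_zero]
      simp only [hsplit]
      have ihs := ih (fun i => s i.succ)
      rw [Fin.sum_univ_succ (fun i => (s i) ^ 2)]
      have expand : ∀ τ : Fin n → Bool,
          (fblSg true * s 0 + ∑ i : Fin n, fblSg (τ i) * s i.succ) ^ 2
          + (fblSg false * s 0 + ∑ i : Fin n, fblSg (τ i) * s i.succ) ^ 2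
          = 2 * (s 0) ^ 2 + 2 * (∑ i : Fin n, fblSg (τ i) * s i.succ) ^ 2 := by
        intro τ; simp only [fblSg]; ring_nf; simp; ring
      rw [Finset.sum_congr rfl (fun τ _ => expand τ), Finset.sum_add_distrib,
        Finset.sum_const, ← Finset.mul_sum, ihs]
      simp [Finset.card_univ]
      ring

private lemma fbl_moment4 : ∀ (m : ℕ) (s : Fin m → ℝ),
    ∑ σ : Fin m → Bool, (∑ i, fblSg (σ i) * s i) ^ 4
      ≤ 3 * 2 ^ m * (∑ i, (s i) ^ 2) ^ 2 := by
  intro m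
  induction m with
  | zero => intro s; simp
  | succ n ih =>
      intro s
      rw [fbl_sum_bool_succ (fun σ => (∑ i, fblSg (σ i) * s i) ^ 4)]
      have hsplit : ∀ (b : Bool) (τ : Fin n → Bool),
          (∑ i : Fin (n + 1), fblSg ((Fin.cons b τ : Fin (n + 1) → Bool) i) * s i)
            = fblSg b * s 0 + ∑ i : Fin n, fblSg (τ i) * s i.succ := by
        intro b τ
        rw [Fin.sum_univ_succ]
        simp [Fin.cons_succ, Fin.cons_zero]
      simp only [hsplit]
      have expand : ∀ τ : Fin n → Bool,
          (fblSg true * s 0 + ∑ i : Fin n, fblSg (τ i) * s i.succ) ^ 4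
          + (fblSg false * s 0 + ∑ i : Fin n, fblSg (τ i) * s i.succ) ^ 4
          = 2 * (s 0) ^ 4 + 12 * (s 0) ^ 2 * (∑ i : Fin n, fblSg (τ i) * s i.succ) ^ 2
            + 2 * (∑ i : Fin n, fblSg (τ i) * s i.succ) ^ 4 := by
        intro τ; simp only [fblSg]; ring_nf; simp; ring
      rw [Finset.sum_congr rfl (fun τ _ => expand τ)]
      rw [Finset.sum_add_distrib, Finset.sum_add_distrib, Finset.sum_const,
        ← Finset.mul_sum, ← Finset.mul_sum]
      have ih4 := ih (fun i => s i.succ)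
      have ih2 := fbl_moment2 n (fun i => s i.succ)
      rw [Fin.sum_univ_succ (fun i => (s i) ^ 2)]
      have h0 : (0 : ℝ) ≤ (s 0) ^ 2 := sq_nonneg _
      have hB : (0 : ℝ) ≤ ∑ i : Fin n, (s i.succ) ^ 2 :=
        Finset.sum_nonneg (fun i _ => sq_nonneg _)
      rw [ih2]
      have hcard2 : (Finset.univ : Finset (Fin n → Bool)).card = 2 ^ n := by simp
      rw [hcard2]
      have hnsmul : (2 ^ n : ℕ) • (2 * (s 0) ^ 4) = (2 ^ n : ℝ) * (2 * (s 0) ^ 4) := by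
        rw [nsmul_eq_mul]; push_cast; ring
      rw [hnsmul]
      have hring : 3 * (2 : ℝ) ^ (n + 1) * ((s 0) ^ 2 + ∑ i : Fin n, (s i.succ) ^ 2) ^ 2
          - (2 ^ n * (2 * (s 0) ^ 4) + 12 * (s 0) ^ 2 * (2 ^ n * ∑ i : Fin n, (s i.succ) ^ 2)
             + 6 * 2 ^ n * (∑ i : Fin n, (s i.succ) ^ 2) ^ 2) = 2 ^ n * (4 * (s 0) ^ 4) := by
        ring
      have hpos : (0 : ℝ) ≤ 2 ^ n * (4 * (s 0) ^ 4) := by positivity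
      linarith [ih4, hring, hpos]

/-- Khintchine's inequality (lower `L¹` bound, constant `√3`). -/
private lemma fbl_khintchine (m : ℕ) (s : Fin m → ℝ) :
    Real.sqrt (∑ i, (s i) ^ 2) * 2 ^ m
      ≤ Real.sqrt 3 * ∑ σ : Fin m → Bool, |∑ i, fblSg (σ i) * s i| := by
  classical
  set B := ∑ i, (s i) ^ 2 with hBdef
  set S : (Fin m → Bool) → ℝ := fun σ => ∑ i, fblSg (σ i) * s i with hSdef
  set A := ∑ σ : Fin m → Bool, |S σ| with hAdef
  have hB : 0 ≤ B := Finset.sum_nonneg (fun i _ => sq_nonneg _)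
  have hA : 0 ≤ A := Finset.sum_nonneg (fun σ _ => abs_nonneg _)
  have hM2 : ∑ σ : Fin m → Bool, (S σ) ^ 2 = 2 ^ m * B := fbl_moment2 m s
  have hM4 : ∑ σ : Fin m → Bool, (S σ) ^ 4 ≤ 3 * 2 ^ m * B ^ 2 := fbl_moment4 m s
  rcases eq_or_lt_of_le hB with hB0 | hBpos
  · rw [← hB0, Real.sqrt_zero, zero_mul]
    positivity
  · have c1 : (∑ σ : Fin m → Bool, (S σ) ^ 2) ^ 2
        ≤ A * ∑ σ : Fin m → Bool, |S σ| ^ 3 := by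
      have hcs := Finset.sum_mul_sq_le_sq_mul_sq Finset.univ
        (fun σ => Real.sqrt |S σ|) (fun σ => Real.sqrt |S σ| * |S σ|)
      calc (∑ σ : Fin m → Bool, (S σ) ^ 2) ^ 2
          = (∑ σ : Fin m → Bool, Real.sqrt |S σ| * (Real.sqrt |S σ| * |S σ|)) ^ 2 := by
            congr 1; apply Finset.sum_congr rfl; intro σ _
            rw [← mul_assoc, Real.mul_self_sqrt (abs_nonneg _), abs_mul_abs_self, sq]
        _ ≤ (∑ σ : Fin m → Bool, Real.sqrt |S σ| ^ 2)
            * ∑ σ : Fin m → Bool, (Real.sqrt |S σ| * |S σ|) ^ 2 := hcs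
        _ = A * ∑ σ : Fin m → Bool, |S σ| ^ 3 := by
            congr 1
            · apply Finset.sum_congr rfl; intro σ _
              exact Real.sq_sqrt (abs_nonneg _)
            · apply Finset.sum_congr rfl; intro σ _
              rw [mul_pow, Real.sq_sqrt (abs_nonneg _)]
              ring
    have c2 : (∑ σ : Fin m → Bool, |S σ| ^ 3) ^ 2
        ≤ (∑ σ : Fin m → Bool, (S σ) ^ 2) * ∑ σ : Fin m → Bool, (S σ) ^ 4 := by
      have hcs := Finset.sum_mul_sq_le_sq_mul_sq Finset.univ
        (fun σ => |S σ|) (fun σ => (S σ) ^ 2)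
      calc (∑ σ : Fin m → Bool, |S σ| ^ 3) ^ 2
          = (∑ σ : Fin m → Bool, |S σ| * (S σ) ^ 2) ^ 2 := by
            congr 1; apply Finset.sum_congr rfl; intro σ _
            rw [show |S σ| ^ 3 = |S σ| * |S σ| ^ 2 from by ring, sq_abs]
        _ ≤ (∑ σ : Fin m → Bool, |S σ| ^ 2) * ∑ σ : Fin m → Bool, ((S σ) ^ 2) ^ 2 := hcs
        _ = (∑ σ : Fin m → Bool, (S σ) ^ 2) * ∑ σ : Fin m → Bool, (S σ) ^ 4 := by
            congr 1
            · apply Finset.sum_congr rfl; intro σ _; rw [sq_abs]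
            · apply Finset.sum_congr rfl; intro σ _; ring
    have key : 2 ^ (2 * m) * B ≤ 3 * A ^ 2 := by
      have h1 : (2 ^ m * B) ^ 4 ≤ A ^ 2 * ((∑ σ : Fin m → Bool, |S σ| ^ 3) ^ 2) := by
        rw [← hM2]
        calc (∑ σ : Fin m → Bool, (S σ) ^ 2) ^ 4
            = ((∑ σ : Fin m → Bool, (S σ) ^ 2) ^ 2) ^ 2 := by ring
          _ ≤ (A * ∑ σ : Fin m → Bool, |S σ| ^ 3) ^ 2 := by
              apply pow_le_pow_left₀ (sq_nonneg _) c1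
          _ = A ^ 2 * ((∑ σ : Fin m → Bool, |S σ| ^ 3) ^ 2) := by ring
      have h2 : A ^ 2 * ((∑ σ : Fin m → Bool, |S σ| ^ 3) ^ 2)
          ≤ A ^ 2 * ((2 ^ m * B) * (3 * 2 ^ m * B ^ 2)) := by
        apply mul_le_mul_of_nonneg_left _ (sq_nonneg A)
        calc (∑ σ : Fin m → Bool, |S σ| ^ 3) ^ 2
            ≤ (∑ σ : Fin m → Bool, (S σ) ^ 2) * ∑ σ : Fin m → Bool, (S σ) ^ 4 := c2
          _ ≤ (2 ^ m * B) * (3 * 2 ^ m * B ^ 2) := by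
              rw [hM2]
              apply mul_le_mul_of_nonneg_left hM4 (by positivity)
      have h3 : (2 ^ m * B) ^ 4 ≤ A ^ 2 * ((2 ^ m * B) * (3 * 2 ^ m * B ^ 2)) :=
        le_trans h1 h2
      have hpos : (0 : ℝ) < 2 ^ (2 * m) * B ^ 3 := by positivity
      apply le_of_mul_le_mul_right _ hpos
      calc 2 ^ (2 * m) * B * (2 ^ (2 * m) * B ^ 3) = (2 ^ m * B) ^ 4 := by ring
        _ ≤ A ^ 2 * ((2 ^ m * B) * (3 * 2 ^ m * B ^ 2)) := h3
        _ = 3 * A ^ 2 * (2 ^ (2 * m) * B ^ 3) := by ring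
    have lhs_eq : Real.sqrt B * 2 ^ m = Real.sqrt (2 ^ (2 * m) * B) := by
      rw [Real.sqrt_mul (by positivity) B]
      rw [show (2 : ℝ) ^ (2 * m) = ((2 : ℝ) ^ m) ^ 2 by ring, Real.sqrt_sq (by positivity)]
      ring
    have rhs_eq : Real.sqrt 3 * A = Real.sqrt (3 * A ^ 2) := by
      rw [Real.sqrt_mul (by norm_num) (A ^ 2), Real.sqrt_sq hA]
    rw [lhs_eq, rhs_eq]
    exact Real.sqrt_le_sqrt key

/-- Cauchy–Schwarz with square roots. -/
private lemma fbl_cs_sqrt {m : ℕ} (f g : Fin m → ℝ) :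
    ∑ i, f i * g i ≤ Real.sqrt (∑ i, f i ^ 2) * Real.sqrt (∑ i, g i ^ 2) := by
  have hcs := Finset.sum_mul_sq_le_sq_mul_sq Finset.univ f g
  have hf : 0 ≤ ∑ i, f i ^ 2 := Finset.sum_nonneg fun i _ => sq_nonneg _
  calc ∑ i, f i * g i ≤ |∑ i, f i * g i| := le_abs_self _
    _ = Real.sqrt ((∑ i, f i * g i) ^ 2) := (Real.sqrt_sq_eq_abs _).symm
    _ ≤ Real.sqrt ((∑ i, f i ^ 2) * ∑ i, g i ^ 2) := Real.sqrt_le_sqrt hcs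
    _ = Real.sqrt (∑ i, f i ^ 2) * Real.sqrt (∑ i, g i ^ 2) := Real.sqrt_mul hf _

end Khintchine

set_option maxHeartbeats 1000000

/-- **Lemma 3.1 (case of ℓ_p, 2 ≤ p < ∞).** There is a constant `K ≥ 1` such that for every
real `p` with `2 ≤ p`, every Banach lattice `X`, every bounded linear operator
`T : ℓ_p → X`, and all scalars `λ_1, …, λ_m`, we have
`‖∑ λ_i • |T e_i|‖ ≤ K ‖T‖ (∑ |λ_i|^r)^(1/r)` where `1/r = 1/2 + 1/p`.
(The hypothesis `Fact (1 ≤ ENNReal.ofReal p)` is automatic from `2 ≤ p`; it is the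
instance Mathlib needs to endow `ℓ_p` with its norm.) -/
theorem fbl_lp_upper_estimate :
    ∃ K : ℝ, 1 ≤ K ∧
      ∀ (p : ℝ), 2 ≤ p →
      ∀ (r : ℝ), 1 / r = 1 / 2 + 1 / p →
      ∀ [Fact (1 ≤ ENNReal.ofReal p)],
      ∀ (X : Type) [NormedAddCommGroup X] [Lattice X] [HasSolidNorm X]
        [IsOrderedAddMonoid X] [NormedSpace ℝ X]
        [CompleteSpace X],
      ∀ (T : lp (fun _ : ℕ => ℝ) (ENNReal.ofReal p) →L[ℝ] X)
        (m : ℕ) (lam : Fin m → ℝ),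
        ‖∑ i, lam i • |T (lp.single (ENNReal.ofReal p) (i : ℕ) (1 : ℝ))|‖ ≤
          K * ‖T‖ * (∑ i, |lam i| ^ r) ^ (1 / r) := by
  classical
  refine ⟨Real.sqrt 3, ?_, ?_⟩
  · rw [show (1 : ℝ) = Real.sqrt 1 from Real.sqrt_one.symm]
    exact Real.sqrt_le_sqrt (by norm_num)
  intro p hp r hr _inst X _instX _instL _instH _instO _instS _instC T m lam
  set pe := ENNReal.ofReal p with hpe
  have hp0 : 0 < p := lt_of_lt_of_le two_pos hp
  have hrrecip : 0 < 1 / r := by rw [hr]; positivity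
  have hrpos : 0 < r := one_div_pos.mp hrrecip
  have hrne : r ≠ 0 := ne_of_gt hrpos
  set c : Fin m → ℝ := fun i => |lam i| with hcdef
  have hc : ∀ i, 0 ≤ c i := fun i => abs_nonneg _
  set al : Fin m → ℝ := fun i => c i ^ (r / 2) with haldef
  set be : Fin m → ℝ := fun i => c i ^ (r / p) with hbedef
  have hbe : ∀ i, 0 ≤ be i := fun i => Real.rpow_nonneg (hc i) _
  set Sb : ℝ := ∑ i, c i ^ r with hSbdef
  have hSb : 0 ≤ Sb := Finset.sum_nonneg fun i _ => Real.rpow_nonneg (hc i) _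
  have hexps : r / 2 + r / p = 1 := by
    have h1 : r / 2 + r / p = r * (1 / 2 + 1 / p) := by ring
    rw [h1, ← hr]
    field_simp
  have halbe : ∀ i, al i * be i = c i := by
    intro i
    rw [haldef, hbedef]
    dsimp only
    rw [← Real.rpow_add' (hc i) (by rw [hexps]; norm_num), hexps, Real.rpow_one]
  have hal2 : ∀ i, al i ^ 2 = c i ^ r := by
    intro i
    rw [haldef]; dsimp only
    rw [sq, ← Real.rpow_add' (hc i) (by rw [show r/2 + r/2 = r by ring]; exact hrne)]
    congr 1; ring
  have hbep : ∀ i, be i ^ p = c i ^ r := by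
    intro i
    rw [hbedef]; dsimp only
    rw [← Real.rpow_mul (hc i), div_mul_cancel₀ _ (ne_of_gt hp0)]
  -- the vectors in the lattice
  set y : Fin m → X := fun i => T (lp.single pe (i : ℕ) (1 : ℝ)) with hydef
  set z : (Fin m → Bool) → X := fun σ => ∑ i, (fblSg (σ i) * be i) • y i with hzdef
  set W : ℝ := Real.sqrt 3 * Real.sqrt Sb / 2 ^ m with hWdef
  have hW : 0 ≤ W := by positivity
  set B : X := ∑ σ : Fin m → Bool, W • |z σ| with hBdef
  -- scalar domination
  have hdom : ∀ t : Fin m → ℝ,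
      ∑ i, c i * |t i| ≤ ∑ σ : Fin m → Bool, W * |∑ i, (fblSg (σ i) * be i) * t i| := by
    intro t
    have step1 : ∑ i, c i * |t i| ≤ Real.sqrt Sb * Real.sqrt (∑ i, (be i * t i) ^ 2) := by
      have he : ∀ i, c i * |t i| = al i * (be i * |t i|) := by
        intro i; rw [← mul_assoc, halbe i]
      rw [Finset.sum_congr rfl (fun i _ => he i)]
      have hcs := fbl_cs_sqrt al (fun i => be i * |t i|)
      have h1 : ∑ i, al i ^ 2 = Sb := by
        rw [hSbdef]; exact Finset.sum_congr rfl (fun i _ => hal2 i)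
      have h2 : ∀ i, (be i * |t i|) ^ 2 = (be i * t i) ^ 2 := by
        intro i; rw [mul_pow, mul_pow, sq_abs]
      calc ∑ i, al i * (be i * |t i|)
          ≤ Real.sqrt (∑ i, al i ^ 2) * Real.sqrt (∑ i, (be i * |t i|) ^ 2) := hcs
        _ = Real.sqrt Sb * Real.sqrt (∑ i, (be i * t i) ^ 2) := by
            rw [h1, Finset.sum_congr rfl (fun i _ => h2 i)]
    have step2 : Real.sqrt (∑ i, (be i * t i) ^ 2) * 2 ^ m
        ≤ Real.sqrt 3 * ∑ σ : Fin m → Bool, |∑ i, fblSg (σ i) * (be i * t i)| :=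
      fbl_khintchine m (fun i => be i * t i)
    have h2m : (0 : ℝ) < 2 ^ m := by positivity
    have step2' : Real.sqrt (∑ i, (be i * t i) ^ 2)
        ≤ Real.sqrt 3 / 2 ^ m * ∑ σ : Fin m → Bool, |∑ i, fblSg (σ i) * (be i * t i)| := by
      rw [div_mul_eq_mul_div, le_div_iff₀ h2m]
      linarith [step2]
    have hsq3 : (0 : ℝ) ≤ Real.sqrt Sb := Real.sqrt_nonneg _
    calc ∑ i, c i * |t i|
        ≤ Real.sqrt Sb * Real.sqrt (∑ i, (be i * t i) ^ 2) := step1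
      _ ≤ Real.sqrt Sb * (Real.sqrt 3 / 2 ^ m
            * ∑ σ : Fin m → Bool, |∑ i, fblSg (σ i) * (be i * t i)|) :=
          mul_le_mul_of_nonneg_left step2' hsq3
      _ = ∑ σ : Fin m → Bool, W * |∑ i, (fblSg (σ i) * be i) * t i| := by
          rw [Finset.mul_sum, Finset.mul_sum]
          apply Finset.sum_congr rfl
          intro σ _
          rw [hWdef]
          have : ∀ i, fblSg (σ i) * (be i * t i) = (fblSg (σ i) * be i) * t i := by
            intro i; ring
          rw [Finset.sum_congr rfl (fun i _ => this i)]
          ring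
  -- per-sign-vector zonotope decomposition ⇒ bound in the lattice
  have hsign : ∀ δ : Fin m → Bool, ∑ i, (if δ i then c i else -c i) • y i ≤ B := by
    intro δ
    have hdomδ : ∀ t : Fin m → ℝ,
        (∑ i, (fblSg (δ i) * c i) * t i)
          ≤ ∑ σ : Fin m → Bool, W * |∑ i, (fblSg (σ i) * be i) * t i| := by
      intro t
      refine le_trans ?_ (hdom t)
      apply Finset.sum_le_sum
      intro i _
      calc fblSg (δ i) * c i * t i ≤ |fblSg (δ i) * c i * t i| := le_abs_self _
        _ = c i * |t i| := by
            rw [abs_mul, abs_mul]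
            have : |fblSg (δ i)| = 1 := by
              cases h : δ i <;> simp [fblSg]
            rw [this, one_mul, abs_of_nonneg (hc i)]
    set a' : (Fin m → Bool) → Fin m → ℝ := fun σ i => fblSg (σ i) * be i with ha'
    set c' : Fin m → ℝ := fun i => fblSg (δ i) * c i with hc'
    obtain ⟨u, hu, hueq0⟩ := fbl_zonotope_mem (fun _ => W) (fun _ => hW) a' c' hdomδ
    have hueq : ∀ i, fblSg (δ i) * c i = ∑ σ : Fin m → Bool, u σ * (fblSg (σ i) * be i) :=
      hueq0
    have hrw : ∑ i, (if δ i then c i else -c i) • y i = ∑ σ : Fin m → Bool, u σ • z σ := by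
      have h1 : ∀ i, (if δ i then c i else -c i) = fblSg (δ i) * c i := by
        intro i; cases h : δ i <;> simp [fblSg]
      rw [Finset.sum_congr rfl (fun i _ => by rw [h1 i])]
      have h2 : ∀ i : Fin m, (fblSg (δ i) * c i) • y i
          = ∑ σ : Fin m → Bool, (u σ * (fblSg (σ i) * be i)) • y i := by
        intro i
        rw [hueq i, Finset.sum_smul]
      rw [Finset.sum_congr rfl (fun i _ => h2 i), Finset.sum_comm]
      apply Finset.sum_congr rfl
      intro σ _
      rw [hzdef]
      dsimp only
      rw [Finset.smul_sum]
      apply Finset.sum_congr rfl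
      intro i _
      rw [mul_smul]
    rw [hrw, hBdef]
    apply Finset.sum_le_sum
    intro σ _
    calc u σ • z σ ≤ |u σ| • |z σ| := fbl_real_smul_le_abs_smul _ _
      _ ≤ W • |z σ| := by
          have h := fbl_real_smul_nonneg (W - |u σ|) (by linarith [hu σ]) (|z σ|) (abs_nonneg _)
          rw [sub_smul, sub_nonneg] at h
          exact h
  have hmain : ∑ i, c i • |y i| ≤ B := fbl_transfer_aux m c hc y B hsign
  -- pass to norms
  have hLle : |(∑ i, lam i • |y i|)| ≤ ∑ i, c i • |y i| := by
    refine sup_le ?_ ?_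
    · apply Finset.sum_le_sum
      intro i _
      have h := fbl_real_smul_le_abs_smul (lam i) (|y i|)
      rwa [abs_abs] at h
    · rw [← Finset.sum_neg_distrib]
      apply Finset.sum_le_sum
      intro i _
      rw [← neg_smul]
      have h := fbl_real_smul_le_abs_smul (-lam i) (|y i|)
      rwa [abs_abs, abs_neg] at h
  have hBnonneg : 0 ≤ B := by
    rw [hBdef]
    apply Finset.sum_nonneg
    intro σ _
    exact fbl_real_smul_nonneg W hW _ (abs_nonneg _)
  have hnorm1 : ‖∑ i, lam i • |y i|‖ ≤ ‖B‖ := by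
    apply norm_le_norm_of_abs_le_abs
    calc |(∑ i, lam i • |y i|)| ≤ ∑ i, c i • |y i| := hLle
      _ ≤ B := hmain
      _ ≤ |B| := le_abs_self B
  -- compute the norms of z σ
  have hpt : pe.toReal = p := ENNReal.toReal_ofReal hp0.le
  have hptpos : 0 < pe.toReal := by rw [hpt]; exact hp0
  have hznorm : ∀ σ : Fin m → Bool, ‖z σ‖ ≤ ‖T‖ * Sb ^ (1 / p) := by
    intro σ
    set d : Fin m → ℝ := fun i => fblSg (σ i) * be i with hddef
    set dd : ℕ → ℝ := fun n => if h : n < m then d ⟨n, h⟩ else 0 with hdddef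
    have hzv : z σ = T (∑ n ∈ Finset.range m, lp.single pe n (dd n)) := by
      rw [hzdef]
      dsimp only
      have h1 : ∀ i : Fin m, (d i) • y i = T (lp.single pe (i : ℕ) (d i)) := by
        intro i
        rw [hydef]
        dsimp only
        rw [← map_smul]
        congr 1
        have hs : (lp.single pe (i : ℕ) ((d i) • (1:ℝ)) : lp (fun _ : ℕ => ℝ) pe)
            = (d i) • lp.single pe (i : ℕ) (1 : ℝ) :=
          lp.single_smul (E := fun _ : ℕ => ℝ) (𝕜 := ℝ) pe (i : ℕ) (d i) (1 : ℝ)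
        rw [smul_eq_mul, mul_one] at hs
        first
          | exact hs
          | exact hs.symm
      rw [Finset.sum_congr rfl (fun i _ => h1 i), ← map_sum]
      congr 1
      have h2 : ∀ i : Fin m, (lp.single pe (i : ℕ) (d i) : lp (fun _ : ℕ => ℝ) pe)
          = (fun n => (lp.single pe n (dd n) : lp (fun _ : ℕ => ℝ) pe)) (i : ℕ) := by
        intro i
        dsimp only
        rw [hdddef]
        simp only [i.isLt, dif_pos, Fin.eta]
      rw [Finset.sum_congr rfl (fun i _ => h2 i)]
      exact Fin.sum_univ_eq_sum_range (fun n => (lp.single pe n (dd n) : lp (fun _ : ℕ => ℝ) pe)) m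
    have hvnorm : ‖∑ n ∈ Finset.range m, lp.single pe n (dd n)‖ ^ pe.toReal = Sb := by
      rw [lp.norm_sum_single hptpos dd (Finset.range m)]
      rw [← Fin.sum_univ_eq_sum_range (fun n => ‖dd n‖ ^ pe.toReal) m]
      rw [hSbdef]
      apply Finset.sum_congr rfl
      intro i _
      have h1 : dd (i : ℕ) = d i := by
        rw [hdddef]; simp only [i.isLt, dif_pos, Fin.eta]
      rw [h1, hddef]
      dsimp only
      have h2 : ‖fblSg (σ i) * be i‖ = be i := by
        rw [Real.norm_eq_abs, abs_mul]
        have : |fblSg (σ i)| = 1 := by cases h : σ i <;> simp [fblSg]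
        rw [this, one_mul, abs_of_nonneg (hbe i)]
      rw [h2, hpt, hbep i]
    have hvnorm' : ‖∑ n ∈ Finset.range m, lp.single pe n (dd n)‖ = Sb ^ (1 / p) := by
      rw [← hvnorm, hpt]
      rw [← Real.rpow_mul (norm_nonneg _), mul_one_div, div_self (ne_of_gt hp0),
        Real.rpow_one]
    calc ‖z σ‖ = ‖T (∑ n ∈ Finset.range m, lp.single pe n (dd n))‖ := by rw [hzv]
      _ ≤ ‖T‖ * ‖∑ n ∈ Finset.range m, lp.single pe n (dd n)‖ := T.le_opNorm _
      _ = ‖T‖ * Sb ^ (1 / p) := by rw [hvnorm']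
  -- final assembly
  have hnormB : ‖B‖ ≤ 2 ^ m * (W * (‖T‖ * Sb ^ (1 / p))) := by
    rw [hBdef]
    calc ‖∑ σ : Fin m → Bool, W • |z σ|‖ ≤ ∑ σ : Fin m → Bool, ‖W • |z σ|‖ :=
        norm_sum_le _ _
      _ = ∑ σ : Fin m → Bool, W * ‖z σ‖ := by
          apply Finset.sum_congr rfl
          intro σ _
          rw [norm_smul, Real.norm_eq_abs, abs_of_nonneg hW, norm_abs_eq_norm]
      _ ≤ ∑ σ : Fin m → Bool, W * (‖T‖ * Sb ^ (1 / p)) := by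
          apply Finset.sum_le_sum
          intro σ _
          exact mul_le_mul_of_nonneg_left (hznorm σ) hW
      _ = 2 ^ m * (W * (‖T‖ * Sb ^ (1 / p))) := by
          rw [Finset.sum_const]
          have hcard : (Finset.univ : Finset (Fin m → Bool)).card = 2 ^ m := by simp
          rw [hcard, nsmul_eq_mul]
          push_cast
          ring
  have hfinal : 2 ^ m * (W * (‖T‖ * Sb ^ (1 / p)))
      = Real.sqrt 3 * ‖T‖ * Sb ^ (1 / r) := by
    have hsqrtSb : Real.sqrt Sb = Sb ^ (1 / 2 : ℝ) := Real.sqrt_eq_rpow Sb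
    have hmul : Sb ^ (1 / 2 : ℝ) * Sb ^ (1 / p) = Sb ^ (1 / r) := by
      rw [← Real.rpow_add' hSb (by rw [← hr]; exact ne_of_gt hrrecip), ← hr]
    have h2m : (2 : ℝ) ^ m ≠ 0 := by positivity
    rw [hWdef, hsqrtSb, ← hmul]
    field_simp
  calc ‖∑ i, lam i • |y i|‖ ≤ ‖B‖ := hnorm1
    _ ≤ 2 ^ m * (W * (‖T‖ * Sb ^ (1 / p))) := hnormB
    _ = Real.sqrt 3 * ‖T‖ * Sb ^ (1 / r) := hfinal
end

section
/- There exists a constant K ≥ 1 (one may take Grothendieck's constant K_G) such that for every Banach lattice X, every bounded linear operator T : c_0 → X, every m ∈ ℕ and all real scalars λ_1, …, λ_m, one has ‖∑_{i=1}^m λ_i |T e_i|‖_X ≤ K · ‖T‖ · (∑_{i=1}^m λ_i^2)^{1/2}, where e_i denotes the i-th canonical basis vector of c_0. -/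
open scoped BigOperators

section AuxSmul

variable {X : Type*} [NormedAddCommGroup X] [Lattice X] [HasSolidNorm X] [IsOrderedAddMonoid X] [NormedSpace ℝ X]

lemma aux_smul_nonneg {r : ℝ} {x : X} (hr : 0 ≤ r) (hx : 0 ≤ x) : 0 ≤ r • x := by
  have hdyadic : ∀ n k : ℕ, 0 ≤ ((k : ℝ) / 2 ^ n) • x := by
    intro n
    induction n with
    | zero =>
      intro k
      have h : ((k : ℝ) / 2 ^ 0) • x = k • x := by
        rw [pow_zero, div_one, Nat.cast_smul_eq_nsmul]
      rw [h]
      exact nsmul_nonneg hx k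
    | succ n ih =>
      intro k
      apply nsmul_two_semiclosed
      have h2 : (2 : ℕ) • (((k : ℝ) / 2 ^ (n+1)) • x) = ((k : ℝ) / 2 ^ n) • x := by
        rw [two_smul, ← add_smul]
        congr 1
        field_simp
        ring
      rw [h2]
      exact ih k
  have hql : ∀ n : ℕ, r - (1/2) ^ n ≤ (⌊2 ^ n * r⌋₊ : ℝ) / 2 ^ n := by
    intro n
    have h1 : (2:ℝ) ^ n * r - 1 ≤ (⌊2 ^ n * r⌋₊ : ℝ) := (Nat.sub_one_lt_floor _).le
    have h2 : (0:ℝ) < 2 ^ n := by positivity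
    rw [le_div_iff₀ h2]
    have h3 : ((1:ℝ)/2) ^ n * 2 ^ n = 1 := by
      rw [← mul_pow]; norm_num
    nlinarith [h1]
  have hqu : ∀ n : ℕ, (⌊2 ^ n * r⌋₊ : ℝ) / 2 ^ n ≤ r := by
    intro n
    have h2 : (0:ℝ) < 2 ^ n := by positivity
    rw [div_le_iff₀ h2]
    have := Nat.floor_le (by positivity : (0:ℝ) ≤ 2 ^ n * r)
    linarith
  have hqt : Filter.Tendsto (fun n : ℕ => (⌊2 ^ n * r⌋₊ : ℝ) / 2 ^ n) Filter.atTop (nhds r) := by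
    apply tendsto_of_tendsto_of_tendsto_of_le_of_le (g := fun n : ℕ => r - (1/2)^n)
      (h := fun _ => r)
    · have h : Filter.Tendsto (fun n : ℕ => ((1:ℝ)/2) ^ n) Filter.atTop (nhds 0) :=
        tendsto_pow_atTop_nhds_zero_of_lt_one (by norm_num) (by norm_num)
      simpa using (tendsto_const_nhds (x := r)).sub h
    · exact tendsto_const_nhds
    · exact hql
    · exact hqu
  have hlim : Filter.Tendsto (fun n : ℕ => ((⌊2 ^ n * r⌋₊ : ℝ) / 2 ^ n) • x)
      Filter.atTop (nhds (r • x)) := hqt.smul tendsto_const_nhds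
  exact ge_of_tendsto hlim (Filter.Eventually.of_forall fun n => hdyadic n _)

lemma aux_smul_le_smul {r : ℝ} {x y : X} (hr : 0 ≤ r) (h : x ≤ y) : r • x ≤ r • y := by
  have h2 := aux_smul_nonneg hr (sub_nonneg.mpr h)
  rw [smul_sub, sub_nonneg] at h2
  exact h2

lemma aux_smul_le_smul_right {c d : ℝ} {x : X} (h : c ≤ d) (hx : 0 ≤ x) : c • x ≤ d • x := by
  have h2 := aux_smul_nonneg (sub_nonneg.mpr h) hx
  rw [sub_smul, sub_nonneg] at h2
  exact h2

lemma aux_abs_smul {c : ℝ} (hc : 0 ≤ c) (x : X) : |c • x| = c • |x| := by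
  have key : ∀ (d : ℝ), 0 ≤ d → ∀ z : X, |d • z| ≤ d • |z| := by
    intro d hd z
    refine abs_le'.mpr ⟨aux_smul_le_smul hd (le_abs_self z), ?_⟩
    rw [← smul_neg]
    exact aux_smul_le_smul hd (neg_le_abs z)
  refine le_antisymm (key c hc x) ?_
  rcases eq_or_lt_of_le hc with h0 | h0
  · simp [← h0]
  · have h1 := key c⁻¹ (by positivity) (c • x)
    rw [smul_smul, inv_mul_cancel₀ h0.ne', one_smul] at h1
    calc c • |x| ≤ c • (c⁻¹ • |c • x|) := aux_smul_le_smul hc h1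
    _ = |c • x| := by rw [smul_smul, mul_inv_cancel₀ h0.ne', one_smul]

lemma aux_abs_smul' (c : ℝ) (x : X) : |c • x| = |c| • |x| := by
  rcases le_or_gt 0 c with h | h
  · rw [abs_of_nonneg h]
    exact aux_abs_smul h x
  · have h1 : c • x = (-c) • (-x) := by rw [neg_smul, smul_neg, neg_neg]
    rw [h1, aux_abs_smul (by linarith) (-x), abs_neg, abs_of_neg h]

lemma aux_sum_abs_le {ι : Type*} [DecidableEq ι] (s : Finset ι) (w : ι → X) (B : X)
    (h : ∀ t : ι → Bool, (∑ i ∈ s, if t i then w i else -w i) ≤ B) :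
    ∑ i ∈ s, |w i| ≤ B := by
  induction s using Finset.induction_on generalizing B with
  | empty => simpa using h fun _ => true
  | @insert a s ha ih =>
    have key : ∀ b : Bool, (∑ i ∈ s, |w i|) ≤ B - (if b then w a else -w a) := by
      intro b
      refine ih _ fun t => ?_
      have h2 := h (Function.update t a b)
      rw [Finset.sum_insert ha, Function.update_self] at h2
      have h3 : (∑ i ∈ s, if Function.update t a b i then w i else -w i)
          = ∑ i ∈ s, if t i then w i else -w i := by
        refine Finset.sum_congr rfl fun i hi => ?_
        rw [Function.update_of_ne (by rintro rfl; exact ha hi) b t]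
      rw [h3] at h2
      exact le_sub_iff_add_le'.mpr h2
    rw [Finset.sum_insert ha]
    have habs : |w a| + ∑ i ∈ s, |w i|
        = (w a + ∑ i ∈ s, |w i|) ⊔ (-w a + ∑ i ∈ s, |w i|) := by
      rw [← sup_add]; rfl
    rw [habs]
    refine sup_le ?_ ?_
    · have h4 := key true
      simp only [if_true] at h4
      exact le_sub_iff_add_le'.mp h4
    · exact le_sub_iff_add_le'.mp (by simpa [sub_neg_eq_add] using key false)

lemma aux_abs_sum {ι : Type*} (s : Finset ι) (v : ι → X) :
    |∑ i ∈ s, v i| ≤ ∑ i ∈ s, |v i| := by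
  classical
  induction s using Finset.induction_on with
  | empty => simp
  | @insert a s ha ih =>
    rw [Finset.sum_insert ha, Finset.sum_insert ha]
    exact le_trans (abs_add_le _ _) (add_le_add le_rfl ih)

end AuxSmul

lemma div_le_div_of_nonneg_right' {a b c : ℝ} (h : a ≤ b) (hc : 0 < c) : a / c ≤ b / c := by
  gcongr


/-- The sign `±1` attached to a boolean. -/
def sg (b : Bool) : ℝ := if b then 1 else -1

lemma sum_split (m : ℕ) (F : (Fin (m+1) → Bool) → ℝ) :
    ∑ σ : Fin (m+1) → Bool, F σ
      = ∑ σ : Fin m → Bool,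
          (F (Fin.cons (α := fun _ => Bool) true σ)
            + F (Fin.cons (α := fun _ => Bool) false σ)) := by
  rw [← Equiv.sum_comp (Fin.consEquiv (fun _ => Bool)) F, Fintype.sum_prod_type,
    Fintype.sum_bool]
  rw [← Finset.sum_add_distrib]
  rfl

lemma inner_split (m : ℕ) (a : Fin (m+1) → ℝ) (b : Bool) (σ : Fin m → Bool) :
    (∑ i : Fin (m+1), sg (Fin.cons (α := fun _ => Bool) b σ i) * a i)
      = sg b * a 0 + ∑ i : Fin m, sg (σ i) * a i.succ := by
  rw [Fin.sum_univ_succ]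
  simp

lemma moment2 : ∀ (m : ℕ) (a : Fin m → ℝ),
    ∑ σ : Fin m → Bool, (∑ i, sg (σ i) * a i) ^ 2 = 2 ^ m * ∑ i, (a i) ^ 2 := by
  intro m
  induction m with
  | zero => intro a; simp
  | succ m ih =>
    intro a
    rw [sum_split]
    have : ∀ σ : Fin m → Bool,
        (∑ i : Fin (m+1), sg (Fin.cons (α := fun _ => Bool) true σ i) * a i) ^ 2
          + (∑ i : Fin (m+1), sg (Fin.cons (α := fun _ => Bool) false σ i) * a i) ^ 2
        = 2 * (a 0) ^ 2 + 2 * (∑ i : Fin m, sg (σ i) * a i.succ) ^ 2 := by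
      intro σ
      rw [inner_split, inner_split]
      simp only [sg, Bool.false_eq_true, if_true, if_false]
      ring
    rw [Finset.sum_congr rfl fun σ _ => this σ, Finset.sum_add_distrib,
      Finset.sum_const, Finset.card_univ]
    simp only [nsmul_eq_mul, Fintype.card_fun, Fintype.card_bool, Fintype.card_fin, Nat.cast_pow,
      Nat.cast_ofNat]
    rw [← Finset.mul_sum, ih (fun i => a i.succ), Fin.sum_univ_succ (fun i => (a i)^2)]
    ring

lemma moment4 : ∀ (m : ℕ) (a : Fin m → ℝ),
    ∑ σ : Fin m → Bool, (∑ i, sg (σ i) * a i) ^ 4 ≤ 3 * 2 ^ m * (∑ i, (a i) ^ 2) ^ 2 := by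
  intro m
  induction m with
  | zero => intro a; simp
  | succ m ih =>
    intro a
    rw [sum_split]
    have key : ∀ σ : Fin m → Bool,
        (∑ i : Fin (m+1), sg (Fin.cons (α := fun _ => Bool) true σ i) * a i) ^ 4
          + (∑ i : Fin (m+1), sg (Fin.cons (α := fun _ => Bool) false σ i) * a i) ^ 4
        = 2 * (a 0) ^ 4 + 12 * (a 0) ^ 2 * (∑ i : Fin m, sg (σ i) * a i.succ) ^ 2
            + 2 * (∑ i : Fin m, sg (σ i) * a i.succ) ^ 4 := by
      intro σ
      rw [inner_split, inner_split]
      simp only [sg, Bool.false_eq_true, if_true, if_false]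
      ring
    rw [Finset.sum_congr rfl fun σ _ => key σ]
    rw [Finset.sum_add_distrib, Finset.sum_add_distrib, Finset.sum_const, Finset.card_univ]
    simp only [nsmul_eq_mul, Fintype.card_fun, Fintype.card_bool, Fintype.card_fin, Nat.cast_pow,
      Nat.cast_ofNat]
    have h2 := moment2 m (fun i => a i.succ)
    have h4 := ih (fun i => a i.succ)
    rw [← Finset.mul_sum, ← Finset.mul_sum]
    rw [h2]
    rw [Fin.sum_univ_succ (fun i => (a i)^2)]
    have hA : 0 ≤ ∑ i : Fin m, (a i.succ) ^ 2 := by positivity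
    have ha0 : 0 ≤ (a 0) ^ 2 := by positivity
    rw [show (3:ℝ) * 2 ^ (m+1) = 6 * 2 ^ m by rw [pow_succ]; ring]
    have hP : (0:ℝ) < 2 ^ m := pow_pos (by norm_num) m
    nlinarith [h4, hA, ha0, hP, mul_nonneg hP.le (mul_nonneg ha0 ha0),
      mul_nonneg (mul_nonneg hP.le ha0) hA]

lemma khintchine (m : ℕ) (a : Fin m → ℝ) :
    Real.sqrt (∑ i, (a i) ^ 2) * 2 ^ m
      ≤ Real.sqrt 3 * ∑ σ : Fin m → Bool, |∑ i, sg (σ i) * a i| := by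
  classical
  set g : (Fin m → Bool) → ℝ := fun σ => ∑ i, sg (σ i) * a i with hg
  set A : ℝ := ∑ i, (a i) ^ 2 with hA
  set N : ℝ := (2:ℝ) ^ m with hN
  set S1 : ℝ := ∑ σ : Fin m → Bool, |g σ| with hS1
  set S3 : ℝ := ∑ σ : Fin m → Bool, |g σ| ^ 3 with hS3
  have hS1n : 0 ≤ S1 := Finset.sum_nonneg fun σ _ => abs_nonneg _
  have hS3n : 0 ≤ S3 := Finset.sum_nonneg fun σ _ => pow_nonneg (abs_nonneg _) 3
  have hS4n : 0 ≤ ∑ σ : Fin m → Bool, (g σ) ^ 4 :=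
    Finset.sum_nonneg fun σ _ => by positivity
  have hAn : (0:ℝ) ≤ A := Finset.sum_nonneg fun i _ => sq_nonneg _
  have hNp : (0:ℝ) < N := pow_pos (by norm_num) m
  have h2 : ∑ σ : Fin m → Bool, (g σ) ^ 2 = N * A := moment2 m a
  have h4 : ∑ σ : Fin m → Bool, (g σ) ^ 4 ≤ 3 * N * A ^ 2 := moment4 m a
  rcases eq_or_lt_of_le hAn with h0 | h0
  · rw [← h0]
    simp
    positivity
  have CS1 : (∑ σ : Fin m → Bool, (g σ) ^ 2) ^ 2 ≤ S1 * S3 := by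
    have := Finset.sum_mul_sq_le_sq_mul_sq Finset.univ
      (fun σ => Real.sqrt |g σ|) (fun σ => |g σ| * Real.sqrt |g σ|)
    calc (∑ σ : Fin m → Bool, (g σ) ^ 2) ^ 2
        = (∑ σ : Fin m → Bool, Real.sqrt |g σ| * (|g σ| * Real.sqrt |g σ|)) ^ 2 := by
          congr 1
          refine Finset.sum_congr rfl fun σ _ => ?_
          rw [show Real.sqrt |g σ| * (|g σ| * Real.sqrt |g σ|)
              = |g σ| * (Real.sqrt |g σ| * Real.sqrt |g σ|) by ring,
            Real.mul_self_sqrt (abs_nonneg _), ← abs_mul, abs_mul_self, ← sq]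
      _ ≤ (∑ σ : Fin m → Bool, Real.sqrt |g σ| ^ 2)
            * ∑ σ : Fin m → Bool, (|g σ| * Real.sqrt |g σ|) ^ 2 := this
      _ = S1 * S3 := by
          congr 1
          · exact Finset.sum_congr rfl fun σ _ => Real.sq_sqrt (abs_nonneg _)
          · refine Finset.sum_congr rfl fun σ _ => ?_
            rw [mul_pow, Real.sq_sqrt (abs_nonneg _)]
            ring
  have CS2 : S3 ^ 2 ≤ (∑ σ : Fin m → Bool, (g σ) ^ 2) * ∑ σ : Fin m → Bool, (g σ) ^ 4 := by
    have := Finset.sum_mul_sq_le_sq_mul_sq Finset.univ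
      (fun σ => |g σ|) (fun σ => (g σ) ^ 2)
    calc S3 ^ 2 = (∑ σ : Fin m → Bool, |g σ| * (g σ) ^ 2) ^ 2 := by
          congr 1
          refine Finset.sum_congr rfl fun σ _ => ?_
          rw [← sq_abs (g σ)]
          ring
      _ ≤ (∑ σ : Fin m → Bool, |g σ| ^ 2) * ∑ σ : Fin m → Bool, ((g σ) ^ 2) ^ 2 := this
      _ = (∑ σ : Fin m → Bool, (g σ) ^ 2) * ∑ σ : Fin m → Bool, (g σ) ^ 4 := by
          congr 1
          · exact Finset.sum_congr rfl fun σ _ => sq_abs _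
          · exact Finset.sum_congr rfl fun σ _ => by ring
  rw [h2] at CS1 CS2
  have key : (N * A) ^ 3 ≤ S1 ^ 2 * (3 * N * A ^ 2) := by
    have e1 : ((N * A) ^ 2) ^ 2 ≤ (S1 * S3) ^ 2 :=
      pow_le_pow_left₀ (sq_nonneg _) CS1 2
    have e2 : (S1 * S3) ^ 2 = S1 ^ 2 * S3 ^ 2 := mul_pow _ _ _
    have e3 : S1 ^ 2 * S3 ^ 2 ≤ S1 ^ 2 * ((N * A) * ∑ σ : Fin m → Bool, (g σ) ^ 4) :=
      mul_le_mul_of_nonneg_left CS2 (sq_nonneg _)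
    have e4 : S1 ^ 2 * ((N * A) * ∑ σ : Fin m → Bool, (g σ) ^ 4)
        ≤ S1 ^ 2 * ((N * A) * (3 * N * A ^ 2)) :=
      mul_le_mul_of_nonneg_left
        (mul_le_mul_of_nonneg_left h4 (by positivity)) (sq_nonneg _)
    have e5 : ((N * A) ^ 2) ^ 2 ≤ S1 ^ 2 * ((N * A) * (3 * N * A ^ 2)) :=
      le_trans e1 (le_trans (le_of_eq e2) (le_trans e3 e4))
    have hNA : 0 < N * A := mul_pos hNp h0
    nlinarith [e5, hNA, sq_nonneg S1]
  have main : A * N ^ 2 ≤ 3 * S1 ^ 2 := by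
    have hpos : 0 < N * A ^ 2 := by positivity
    nlinarith [key, hpos]
  calc Real.sqrt A * N = Real.sqrt (A * N ^ 2) := by
        rw [Real.sqrt_mul hAn, Real.sqrt_sq hNp.le]
    _ ≤ Real.sqrt (3 * S1 ^ 2) := Real.sqrt_le_sqrt main
    _ = Real.sqrt 3 * S1 := by
        rw [Real.sqrt_mul (by norm_num), Real.sqrt_sq hS1n]

lemma exists_signs (m : ℕ) (N : ℝ) (hN : 0 < N) (c : Fin m → ℝ)
    (P : ∀ a : Fin m → ℝ,
      ∑ i, c i * a i ≤ (1/N) * ∑ σ : Fin m → Bool, |∑ i, sg (σ i) * a i|) :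
    ∃ s : (Fin m → Bool) → ℝ, (∀ σ, |s σ| ≤ 1/N) ∧
      ∀ i, ∑ σ : Fin m → Bool, s σ * sg (σ i) = c i := by
  classical
  have h1N : (0:ℝ) < 1/N := by positivity
  set Φ : ((Fin m → Bool) → ℝ) →ₗ[ℝ] (Fin m → ℝ) :=
    { toFun := fun s => fun i => ∑ σ : Fin m → Bool, s σ * sg (σ i)
      map_add' := by
        intro s t; funext i
        simp [add_mul, Finset.sum_add_distrib]
      map_smul' := by
        intro r s; funext i
        simp [Finset.mul_sum, mul_assoc] } with hΦ
  set K : Set ((Fin m → Bool) → ℝ) :=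
    Set.pi Set.univ (fun _ => Set.Icc (-(1/N)) (1/N)) with hK
  have hKcvx : Convex ℝ K := convex_pi fun _ _ => convex_Icc _ _
  have hKcpt : IsCompact K := isCompact_univ_pi fun _ => isCompact_Icc
  set S : Set (Fin m → ℝ) := Φ '' K with hS
  have hScvx : Convex ℝ S := hKcvx.linear_image Φ
  have hScl : IsClosed S :=
    (hKcpt.image Φ.continuous_of_finiteDimensional).isClosed
  by_contra hc
  have hcS : c ∉ S := by
    rintro ⟨s, hsK, hsc⟩
    refine hc ⟨s, fun σ => ?_, fun i => ?_⟩
    · have := hsK σ (Set.mem_univ σ)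
      rw [abs_le]; exact ⟨this.1, this.2⟩
    · exact congrFun hsc i
  obtain ⟨f, u, hfu, huc⟩ := geometric_hahn_banach_closed_point hScvx hScl hcS
  set a : Fin m → ℝ := fun i => f (fun j => if i = j then (1:ℝ) else 0) with ha
  have hfv : ∀ v : Fin m → ℝ, f v = ∑ i, v i * a i := by
    intro v
    conv_lhs => rw [pi_eq_sum_univ v]
    rw [map_sum]
    exact Finset.sum_congr rfl fun i _ => by rw [map_smul, smul_eq_mul, ha]
  set g : (Fin m → Bool) → ℝ := fun σ => ∑ i, sg (σ i) * a i with hgdef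
  set s₀ : (Fin m → Bool) → ℝ := fun σ => if 0 ≤ g σ then 1/N else -(1/N) with hs₀
  have hs₀K : s₀ ∈ K := by
    intro σ _
    simp only [hs₀]
    by_cases h : 0 ≤ g σ
    · rw [if_pos h]
      exact Set.mem_Icc.mpr ⟨by linarith, le_rfl⟩
    · rw [if_neg h]
      exact Set.mem_Icc.mpr ⟨le_rfl, by linarith⟩
  have habs : ∀ σ, s₀ σ * g σ = (1/N) * |g σ| := by
    intro σ
    simp only [hs₀]
    by_cases h : 0 ≤ g σ
    · rw [if_pos h, abs_of_nonneg h]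
    · rw [if_neg h, abs_of_neg (not_le.mp h)]
      ring
  have hval : f (Φ s₀) = (1/N) * ∑ σ : Fin m → Bool, |g σ| := by
    rw [hfv]
    have step1 : ∀ i, (Φ s₀) i = ∑ σ : Fin m → Bool, s₀ σ * sg (σ i) := fun i => rfl
    calc ∑ i, (Φ s₀) i * a i
        = ∑ i, ∑ σ : Fin m → Bool, s₀ σ * sg (σ i) * a i := by
          refine Finset.sum_congr rfl fun i _ => ?_
          rw [step1, Finset.sum_mul]
      _ = ∑ σ : Fin m → Bool, ∑ i, s₀ σ * sg (σ i) * a i := Finset.sum_comm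
      _ = ∑ σ : Fin m → Bool, s₀ σ * g σ := by
          refine Finset.sum_congr rfl fun σ _ => ?_
          rw [hgdef, Finset.mul_sum]
          exact Finset.sum_congr rfl fun i _ => by ring
      _ = ∑ σ : Fin m → Bool, (1/N) * |g σ| := Finset.sum_congr rfl fun σ _ => habs σ
      _ = (1/N) * ∑ σ : Fin m → Bool, |g σ| := (Finset.mul_sum _ _ _).symm
  have hPa := P a
  have hfc : f c = ∑ i, c i * a i := hfv c
  have hlt : f (Φ s₀) < u := hfu _ ⟨s₀, hs₀K, rfl⟩
  rw [hval] at hlt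
  rw [hfc] at huc
  have : (∑ i, c i * a i) < (1/N) * ∑ σ : Fin m → Bool, |g σ| := by linarith
  have hPa' : ∑ i, c i * a i ≤ (1/N) * ∑ σ : Fin m → Bool, |g σ| := hPa
  linarith

lemma c0_sum_apply {ι : Type*} (s : Finset ι) (f : ι → ZeroAtInftyContinuousMap ℕ ℝ) (j : ℕ) :
    (∑ i ∈ s, f i) j = ∑ i ∈ s, f i j := by
  classical
  induction s using Finset.induction_on with
  | empty => simp
  | @insert a s ha ih => rw [Finset.sum_insert ha, Finset.sum_insert ha, ← ih]; simp

lemma c0_norm_le (m : ℕ) (e : ℕ → ZeroAtInftyContinuousMap ℕ ℝ)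
    (he : ∀ i j : ℕ, e i j = if j = i then 1 else 0) (σ : Fin m → Bool) :
    ‖∑ i : Fin m, sg (σ i) • e (i : ℕ)‖ ≤ 1 := by
  classical
  rw [← ZeroAtInftyContinuousMap.norm_toBCF_eq_norm]
  refine (BoundedContinuousFunction.norm_le (by norm_num)).mpr fun j => ?_
  have hev : (∑ i : Fin m, sg (σ i) • e (i : ℕ)) j = ∑ i : Fin m, sg (σ i) * e (i : ℕ) j := by
    rw [c0_sum_apply]
    exact Finset.sum_congr rfl fun i _ => by simp
  show ‖(∑ i : Fin m, sg (σ i) • e (i : ℕ)) j‖ ≤ 1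
  rw [Real.norm_eq_abs, hev]
  calc |∑ i : Fin m, sg (σ i) * e (i : ℕ) j|
      ≤ ∑ i : Fin m, |sg (σ i) * e (i : ℕ) j| := Finset.abs_sum_le_sum_abs _ _
    _ ≤ ∑ i : Fin m, (if j = (i : ℕ) then (1:ℝ) else 0) := by
        refine Finset.sum_le_sum fun i _ => ?_
        rw [he i j, abs_mul]
        by_cases h : j = (i : ℕ)
        · rw [if_pos h]
          cases hσ : σ i <;> simp [sg]
        · rw [if_neg h]
          simp
    _ ≤ 1 := by
        by_cases hj : j < m
        · rw [Finset.sum_eq_single_of_mem (⟨j, hj⟩ : Fin m) (Finset.mem_univ _)]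
          · simp
          · intro i _ hi
            rw [if_neg]
            intro hji
            exact hi (by ext; simp [← hji])
        · rw [Finset.sum_eq_zero]
          · norm_num
          · intro i _
            rw [if_neg]
            intro hji
            exact hj (hji ▸ i.isLt)

/-- **Remark after Lemma 3.1 (case of c₀).** There is a constant `K ≥ 1` such that for every
Banach lattice `X`, every bounded linear operator `T : c₀ → X`, and all scalars
`λ_1, …, λ_m`, we have `‖∑ λ_i • |T e_i|‖ ≤ K ‖T‖ (∑ λ_i^2)^(1/2)`, where
`e i` is the canonical `i`-th basis vector of `c₀ = C₀(ℕ, ℝ)`. -/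
theorem fbl_c0_upper_estimate :
    ∃ K : ℝ, 1 ≤ K ∧
      ∀ (X : Type) [NormedAddCommGroup X] [Lattice X] [HasSolidNorm X] [IsOrderedAddMonoid X] [NormedSpace ℝ X] [CompleteSpace X],
      ∀ (T : ZeroAtInftyContinuousMap ℕ ℝ →L[ℝ] X),
      ∀ (e : ℕ → ZeroAtInftyContinuousMap ℕ ℝ),
        (∀ i j : ℕ, e i j = if j = i then 1 else 0) →
      ∀ (m : ℕ) (lam : Fin m → ℝ),
        ‖∑ i, lam i • |T (e (i : ℕ))|‖ ≤
          K * ‖T‖ * (∑ i, (lam i) ^ 2) ^ ((1 : ℝ) / 2) := by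
  classical
  refine ⟨Real.sqrt 3, ?_, ?_⟩
  · rw [show (1:ℝ) = Real.sqrt 1 from Real.sqrt_one.symm]
    exact Real.sqrt_le_sqrt (by norm_num)
  intro X _ _ _ _ _ _ T e he m lam
  set x : Fin m → X := fun i => T (e (i : ℕ)) with hx
  by_cases h0 : ∑ i, (lam i) ^ 2 = 0
  · have hz : ∀ i, lam i = 0 := by
      intro i
      have h := (Finset.sum_eq_zero_iff_of_nonneg
        (fun i _ => sq_nonneg (lam i))).mp h0 i (Finset.mem_univ i)
      exact pow_eq_zero_iff (by norm_num : (2:ℕ) ≠ 0) |>.mp h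
    have hzero : ∑ i, lam i • |x i| = (0 : X) :=
      Finset.sum_eq_zero fun i _ => by rw [hz i, zero_smul]
    rw [hzero, norm_zero, h0, Real.zero_rpow (by norm_num), mul_zero]
  · have hAp : 0 < ∑ i, (lam i) ^ 2 :=
      lt_of_le_of_ne (Finset.sum_nonneg fun i _ => sq_nonneg _) (Ne.symm h0)
    set Λ : ℝ := Real.sqrt (∑ i, (lam i) ^ 2) with hΛ
    have hΛp : 0 < Λ := Real.sqrt_pos.mpr hAp
    have h3p : (0:ℝ) < Real.sqrt 3 := Real.sqrt_pos.mpr (by norm_num)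
    set N : ℝ := (2:ℝ) ^ m with hN
    have hNp : (0:ℝ) < N := pow_pos (by norm_num) m
    set y : (Fin m → Bool) → X := fun σ => ∑ i, sg (σ i) • x i with hy
    have hynorm : ∀ σ, ‖y σ‖ ≤ ‖T‖ := by
      intro σ
      have hyT : y σ = T (∑ i : Fin m, sg (σ i) • e (i : ℕ)) := by
        rw [hy, map_sum]
        exact Finset.sum_congr rfl fun i _ => (T.map_smul _ _).symm
      rw [hyT]
      calc ‖T (∑ i : Fin m, sg (σ i) • e (i : ℕ))‖
          ≤ ‖T‖ * ‖∑ i : Fin m, sg (σ i) • e (i : ℕ)‖ := T.le_opNorm _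
        _ ≤ ‖T‖ * 1 := mul_le_mul_of_nonneg_left (c0_norm_le m e he σ) (norm_nonneg T)
        _ = ‖T‖ := mul_one _
    set B : X := ∑ σ : Fin m → Bool, ((Real.sqrt 3 * Λ) * (1/N)) • |y σ| with hB
    have hpattern : ∀ t : Fin m → Bool,
        (∑ i ∈ Finset.univ, if t i then (|lam i| • x i) else -(|lam i| • x i)) ≤ B := by
      intro t
      set c : Fin m → ℝ := fun i => sg (t i) * |lam i| / (Real.sqrt 3 * Λ) with hcdef
      have hP : ∀ a : Fin m → ℝ,
          ∑ i, c i * a i ≤ (1/N) * ∑ σ : Fin m → Bool, |∑ i, sg (σ i) * a i| := by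
        intro a
        have step1 : ∑ i, c i * a i ≤ (∑ i, |lam i| * |a i|) / (Real.sqrt 3 * Λ) := by
          rw [Finset.sum_div]
          refine Finset.sum_le_sum fun i _ => ?_
          show sg (t i) * |lam i| / (Real.sqrt 3 * Λ) * a i
              ≤ |lam i| * |a i| / (Real.sqrt 3 * Λ)
          rw [div_mul_eq_mul_div]
          have hnum : sg (t i) * |lam i| * a i ≤ |lam i| * |a i| := by
            have hsa : sg (t i) * a i ≤ |a i| := by
              cases t i
              · simp only [sg, Bool.false_eq_true, if_false]
                rw [neg_one_mul]
                exact neg_le_abs _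
              · simp only [sg, if_true, one_mul]
                exact le_abs_self _
            calc sg (t i) * |lam i| * a i = |lam i| * (sg (t i) * a i) := by ring
              _ ≤ |lam i| * |a i| := mul_le_mul_of_nonneg_left hsa (abs_nonneg _)
          exact div_le_div_of_nonneg_right' hnum (by positivity)
        have step2 : (∑ i, |lam i| * |a i|) ≤ Λ * Real.sqrt (∑ i, (a i) ^ 2) := by
          have hcs := Finset.sum_mul_sq_le_sq_mul_sq Finset.univ
            (fun i => |lam i|) (fun i => |a i|)
          have hsq : (∑ i, |lam i| * |a i|) ^ 2
              ≤ (∑ i, (lam i) ^ 2) * (∑ i, (a i) ^ 2) := by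
            simpa [sq_abs] using hcs
          have hnn : 0 ≤ ∑ i, |lam i| * |a i| :=
            Finset.sum_nonneg fun i _ => mul_nonneg (abs_nonneg _) (abs_nonneg _)
          calc ∑ i, |lam i| * |a i|
              = Real.sqrt ((∑ i, |lam i| * |a i|) ^ 2) := (Real.sqrt_sq hnn).symm
            _ ≤ Real.sqrt ((∑ i, (lam i) ^ 2) * (∑ i, (a i) ^ 2)) := Real.sqrt_le_sqrt hsq
            _ = Λ * Real.sqrt (∑ i, (a i) ^ 2) := by
                rw [Real.sqrt_mul hAp.le, hΛ]
        have step3 := khintchine m a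
        set S : ℝ := ∑ σ : Fin m → Bool, |∑ i, sg (σ i) * a i| with hSdef
        have hfin : Real.sqrt (∑ i, (a i) ^ 2) / Real.sqrt 3 ≤ (1/N) * S := by
          rw [div_le_iff₀ h3p]
          have hS' : Real.sqrt (∑ i, (a i) ^ 2) * N ≤ Real.sqrt 3 * S := step3
          have : (1/N) * S * Real.sqrt 3 = Real.sqrt 3 * S / N := by ring
          rw [this, le_div_iff₀ hNp]
          linarith
        calc ∑ i, c i * a i ≤ (∑ i, |lam i| * |a i|) / (Real.sqrt 3 * Λ) := step1
          _ ≤ (Λ * Real.sqrt (∑ i, (a i) ^ 2)) / (Real.sqrt 3 * Λ) :=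
              div_le_div_of_nonneg_right' step2 (by positivity)
          _ = Real.sqrt (∑ i, (a i) ^ 2) / Real.sqrt 3 := by
              field_simp
          _ ≤ (1/N) * S := hfin
      obtain ⟨s, hs1, hs2⟩ := exists_signs m N hNp c hP
      have h1 : ∀ i : Fin m,
          (if t i then (|lam i| • x i) else -(|lam i| • x i))
            = ((Real.sqrt 3 * Λ) * c i) • x i := by
        intro i
        have hci : (Real.sqrt 3 * Λ) * c i = sg (t i) * |lam i| := by
          show (Real.sqrt 3 * Λ) * (sg (t i) * |lam i| / (Real.sqrt 3 * Λ))
              = sg (t i) * |lam i|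
          rw [mul_comm]
          exact div_mul_cancel₀ _ (by positivity)
        rw [hci]
        cases t i
        · simp only [sg, Bool.false_eq_true, if_false, neg_one_mul, neg_smul]
        · simp only [sg, if_true, one_mul]
      have h2' : (∑ i ∈ Finset.univ, if t i then (|lam i| • x i) else -(|lam i| • x i))
          = (Real.sqrt 3 * Λ) • ∑ σ : Fin m → Bool, s σ • y σ := by
        rw [Finset.sum_congr rfl fun i _ => h1 i]
        rw [Finset.sum_congr rfl fun (i : Fin m) _ =>
          (mul_smul (Real.sqrt 3 * Λ) (c i) (x i) : _), ← Finset.smul_sum]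
        congr 1
        calc ∑ i, c i • x i
            = ∑ i, (∑ σ : Fin m → Bool, s σ * sg (σ i)) • x i :=
              Finset.sum_congr rfl fun i _ => by rw [hs2 i]
          _ = ∑ i, ∑ σ : Fin m → Bool, (s σ * sg (σ i)) • x i :=
              Finset.sum_congr rfl fun i _ => Finset.sum_smul
          _ = ∑ σ : Fin m → Bool, ∑ i, (s σ * sg (σ i)) • x i := Finset.sum_comm
          _ = ∑ σ : Fin m → Bool, s σ • y σ := by
              refine Finset.sum_congr rfl fun σ _ => ?_
              rw [hy, Finset.smul_sum]
              exact Finset.sum_congr rfl fun i _ => mul_smul _ _ _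
      rw [h2', hB]
      have hterm : ∀ σ : Fin m → Bool, s σ • y σ ≤ (1/N) • |y σ| := by
        intro σ
        calc s σ • y σ ≤ |s σ • y σ| := le_abs_self _
          _ = |s σ| • |y σ| := aux_abs_smul' _ _
          _ ≤ (1/N) • |y σ| := aux_smul_le_smul_right (hs1 σ) (abs_nonneg _)
      calc (Real.sqrt 3 * Λ) • ∑ σ : Fin m → Bool, s σ • y σ
          ≤ (Real.sqrt 3 * Λ) • ∑ σ : Fin m → Bool, (1/N) • |y σ| :=
            aux_smul_le_smul (by positivity) (Finset.sum_le_sum fun σ _ => hterm σ)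
        _ = ∑ σ : Fin m → Bool, ((Real.sqrt 3 * Λ) * (1/N)) • |y σ| := by
            rw [Finset.smul_sum]
            exact Finset.sum_congr rfl fun σ _ => (mul_smul _ _ _).symm
    have hsum1 : ∑ i : Fin m, abs (|lam i| • x i) ≤ B :=
      aux_sum_abs_le Finset.univ (fun i => |lam i| • x i) B hpattern
    have hsum2 : ∑ i : Fin m, |lam i| • |x i| ≤ B := by
      calc ∑ i : Fin m, |lam i| • |x i|
          = ∑ i : Fin m, abs (|lam i| • x i) :=
            Finset.sum_congr rfl fun i _ => (aux_abs_smul (abs_nonneg (lam i)) (x i)).symm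
        _ ≤ B := hsum1
    have hBpos : (0 : X) ≤ B :=
      Finset.sum_nonneg fun σ _ => aux_smul_nonneg (by positivity) (abs_nonneg _)
    have hL0 : abs (∑ i : Fin m, lam i • |x i|) ≤ ∑ i : Fin m, |lam i| • |x i| := by
      refine le_trans (aux_abs_sum Finset.univ _) (Finset.sum_le_sum fun i _ => ?_)
      rw [aux_abs_smul' (lam i) |x i|, abs_abs]
    have hnorm1 : ‖∑ i, lam i • |x i|‖ ≤ ‖B‖ := by
      refine norm_le_norm_of_abs_le_abs ?_
      rw [abs_of_nonneg hBpos]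
      exact le_trans hL0 hsum2
    have hnorm2 : ‖B‖ ≤ Real.sqrt 3 * Λ * ‖T‖ := by
      calc ‖B‖ ≤ ∑ σ : Fin m → Bool, ‖((Real.sqrt 3 * Λ) * (1/N)) • |y σ|‖ :=
            norm_sum_le _ _
        _ ≤ ∑ σ : Fin m → Bool, (Real.sqrt 3 * Λ) * (1/N) * ‖T‖ := by
            refine Finset.sum_le_sum fun σ _ => ?_
            rw [norm_smul, Real.norm_eq_abs, abs_of_nonneg (by positivity),
              norm_abs_eq_norm]
            exact mul_le_mul_of_nonneg_left (hynorm σ) (by positivity)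
        _ = ((2:ℝ) ^ m) * ((Real.sqrt 3 * Λ) * (1/N) * ‖T‖) := by
            rw [Finset.sum_const, Finset.card_univ]
            simp only [nsmul_eq_mul, Fintype.card_fun, Fintype.card_bool, Fintype.card_fin,
              Nat.cast_pow, Nat.cast_ofNat]
        _ = Real.sqrt 3 * Λ * ‖T‖ := by
            rw [hN]
            field_simp
    calc ‖∑ i, lam i • |x i|‖ ≤ ‖B‖ := hnorm1
      _ ≤ Real.sqrt 3 * Λ * ‖T‖ := hnorm2
      _ = Real.sqrt 3 * ‖T‖ * (∑ i, (lam i) ^ 2) ^ ((1 : ℝ) / 2) := by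
          rw [hΛ]
          simp only [Real.sqrt_eq_rpow]
          ring
end

section
/- There exists a constant K ≥ 1 (one may take Grothendieck's constant K_G) such that: for every m ∈ ℕ, all real scalars λ_1, …, λ_m, every n ∈ ℕ and all continuous linear functionals x_1*, …, x_n* on c_0 satisfying sup_{‖x‖ ≤ 1} ∑_{k=1}^n |x_k*(x)| ≤ 1, one has ∑_{k=1}^n | ∑_{i=1}^m λ_i |x_k*(e_i)| | ≤ K · (∑_{i=1}^m λ_i^2)^{1/2}. -/
open Finset

/-- The signed sum `∑_{i∈s} ε_S(i) b_i` where `ε_S(i) = 1` if `i ∈ S`, `-1` otherwise. -/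
private def Ysum {ι : Type*} [DecidableEq ι] (b : ι → ℝ) (s S : Finset ι) : ℝ :=
  ∑ i ∈ s, (if i ∈ S then (1:ℝ) else -1) * b i

private lemma Ysum_insert_left {ι : Type*} [DecidableEq ι] (b : ι → ℝ) {a : ι} {s : Finset ι}
    (ha : a ∉ s) {S : Finset ι} (hS : S ∈ s.powerset) :
    Ysum b (insert a s) S = Ysum b s S - b a := by
  have haS : a ∉ S := fun h => ha (Finset.mem_powerset.mp hS h)
  unfold Ysum
  rw [Finset.sum_insert ha, if_neg haS]
  ring

private lemma Ysum_insert_right {ι : Type*} [DecidableEq ι] (b : ι → ℝ) {a : ι} {s : Finset ι}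
    (ha : a ∉ s) (S : Finset ι) :
    Ysum b (insert a s) (insert a S) = Ysum b s S + b a := by
  unfold Ysum
  rw [Finset.sum_insert ha, if_pos (Finset.mem_insert_self a S), one_mul]
  have h : ∀ i ∈ s, (if i ∈ insert a S then (1:ℝ) else -1) * b i
      = (if i ∈ S then (1:ℝ) else -1) * b i := by
    intro i hi
    have hia : i ≠ a := fun h => ha (h ▸ hi)
    simp [Finset.mem_insert, hia]
  rw [Finset.sum_congr rfl h]
  ring

private lemma sign_moments {ι : Type*} [DecidableEq ι] (b : ι → ℝ) (s : Finset ι) :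
    (∑ S ∈ s.powerset, Ysum b s S) = 0 ∧
    (∑ S ∈ s.powerset, (Ysum b s S) ^ 2) = 2 ^ s.card * ∑ i ∈ s, b i ^ 2 ∧
    (∑ S ∈ s.powerset, (Ysum b s S) ^ 3) = 0 ∧
    (∑ S ∈ s.powerset, (Ysum b s S) ^ 4) ≤ 3 * 2 ^ s.card * (∑ i ∈ s, b i ^ 2) ^ 2 := by
  induction s using Finset.induction_on with
  | empty => simp [Ysum]
  | @insert a s ha ih =>
    obtain ⟨ih1, ih2, ih3, ih4⟩ := ih
    have hcard : ((s.powerset).card : ℝ) = 2 ^ s.card := by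
      rw [Finset.card_powerset]; push_cast; ring
    have hc : (insert a s).card = s.card + 1 := Finset.card_insert_of_notMem ha
    have step : ∀ p : ℕ, ∑ S ∈ (insert a s).powerset, (Ysum b (insert a s) S) ^ p
        = ∑ S ∈ s.powerset, ((Ysum b s S - b a) ^ p + (Ysum b s S + b a) ^ p) := by
      intro p
      rw [Finset.sum_powerset_insert ha, ← Finset.sum_add_distrib]
      refine Finset.sum_congr rfl fun S hS => ?_
      rw [Ysum_insert_left b ha hS, Ysum_insert_right b ha S]
    have ht : ∑ i ∈ insert a s, b i ^ 2 = (∑ i ∈ s, b i ^ 2) + b a ^ 2 := by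
      rw [Finset.sum_insert ha]; ring
    refine ⟨?_, ?_, ?_, ?_⟩
    · rw [show ∑ S ∈ (insert a s).powerset, Ysum b (insert a s) S
          = ∑ S ∈ (insert a s).powerset, (Ysum b (insert a s) S) ^ 1 by simp, step 1,
        show ∑ S ∈ s.powerset, ((Ysum b s S - b a) ^ 1 + (Ysum b s S + b a) ^ 1)
          = ∑ S ∈ s.powerset, (2 * Ysum b s S) from Finset.sum_congr rfl fun S _ => by ring,
        ← Finset.mul_sum, ih1, mul_zero]
    · rw [step 2,
        show ∑ S ∈ s.powerset, ((Ysum b s S - b a) ^ 2 + (Ysum b s S + b a) ^ 2)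
          = ∑ S ∈ s.powerset, (2 * (Ysum b s S) ^ 2 + 2 * b a ^ 2)
          from Finset.sum_congr rfl fun S _ => by ring,
        Finset.sum_add_distrib, ← Finset.mul_sum, ih2, Finset.sum_const, nsmul_eq_mul,
        hcard, ht, hc]
      ring
    · rw [step 3,
        show ∑ S ∈ s.powerset, ((Ysum b s S - b a) ^ 3 + (Ysum b s S + b a) ^ 3)
          = ∑ S ∈ s.powerset, (2 * (Ysum b s S) ^ 3 + 6 * b a ^ 2 * Ysum b s S)
          from Finset.sum_congr rfl fun S _ => by ring,
        Finset.sum_add_distrib, ← Finset.mul_sum, ← Finset.mul_sum, ih1, ih3]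
      ring
    · rw [step 4,
        show ∑ S ∈ s.powerset, ((Ysum b s S - b a) ^ 4 + (Ysum b s S + b a) ^ 4)
          = ∑ S ∈ s.powerset, (2 * (Ysum b s S) ^ 4 + 12 * b a ^ 2 * (Ysum b s S) ^ 2
              + 2 * b a ^ 4)
          from Finset.sum_congr rfl fun S _ => by ring,
        Finset.sum_add_distrib, Finset.sum_add_distrib, ← Finset.mul_sum, ← Finset.mul_sum,
        ih2, Finset.sum_const, nsmul_eq_mul, hcard, ht, hc]
      have h2 : (2:ℝ) ^ (s.card + 1) = 2 * 2 ^ s.card := by rw [pow_succ]; ring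
      rw [h2]
      nlinarith [ih4, sq_nonneg (b a), sq_nonneg (∑ i ∈ s, b i ^ 2),
        pow_pos (by norm_num : (0:ℝ) < 2) s.card, sq_nonneg (b a ^ 2),
        mul_nonneg (mul_nonneg (le_of_lt (pow_pos (by norm_num : (0:ℝ) < 2) s.card)) (sq_nonneg (b a))) (sq_nonneg (b a))]

private lemma khintchine_s4 {ι : Type*} [DecidableEq ι] (b : ι → ℝ) (s : Finset ι) :
    (2:ℝ) ^ s.card * Real.sqrt (∑ i ∈ s, b i ^ 2) ≤
      Real.sqrt 3 * ∑ S ∈ s.powerset, |Ysum b s S| := by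
  obtain ⟨-, hB, -, hD⟩ := sign_moments b s
  set t := ∑ i ∈ s, b i ^ 2 with htdef
  set N := (2:ℝ) ^ s.card with hN
  set A := ∑ S ∈ s.powerset, |Ysum b s S| with hA
  have hA0 : 0 ≤ A := Finset.sum_nonneg fun S _ => abs_nonneg _
  have ht0 : 0 ≤ t := Finset.sum_nonneg fun i _ => sq_nonneg _
  have hN0 : (0:ℝ) < N := pow_pos (by norm_num) _
  rcases eq_or_lt_of_le ht0 with h0 | ht0
  · rw [← h0, Real.sqrt_zero, mul_zero]
    positivity
  set C := ∑ S ∈ s.powerset, |Ysum b s S| ^ 3 with hC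
  have hC0 : 0 ≤ C := Finset.sum_nonneg fun S _ => by positivity
  have hBC : (N * t) ^ 2 ≤ A * C := by
    rw [← hB]
    have h := Finset.sum_mul_sq_le_sq_mul_sq s.powerset
      (fun S => Real.sqrt |Ysum b s S|) (fun S => |Ysum b s S| * Real.sqrt |Ysum b s S|)
    have e1 : ∑ S ∈ s.powerset,
        Real.sqrt |Ysum b s S| * (|Ysum b s S| * Real.sqrt |Ysum b s S|)
        = ∑ S ∈ s.powerset, (Ysum b s S) ^ 2 := by
      refine Finset.sum_congr rfl fun S _ => ?_
      rw [show Real.sqrt |Ysum b s S| * (|Ysum b s S| * Real.sqrt |Ysum b s S|)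
          = (Real.sqrt |Ysum b s S| * Real.sqrt |Ysum b s S|) * |Ysum b s S| by ring,
        Real.mul_self_sqrt (abs_nonneg _), ← abs_mul, abs_mul_self]
      ring
    have e2 : ∑ S ∈ s.powerset, (Real.sqrt |Ysum b s S|) ^ 2 = A := by
      refine Finset.sum_congr rfl fun S _ => Real.sq_sqrt (abs_nonneg _)
    have e3 : ∑ S ∈ s.powerset, (|Ysum b s S| * Real.sqrt |Ysum b s S|) ^ 2 = C := by
      refine Finset.sum_congr rfl fun S _ => ?_
      rw [mul_pow, Real.sq_sqrt (abs_nonneg _)]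
      ring
    rw [e1, e2, e3] at h
    exact h
  have hCD : C ^ 2 ≤ (N * t) * ∑ S ∈ s.powerset, (Ysum b s S) ^ 4 := by
    rw [← hB]
    have h := Finset.sum_mul_sq_le_sq_mul_sq s.powerset
      (fun S => |Ysum b s S|) (fun S => (Ysum b s S) ^ 2)
    have e1 : ∑ S ∈ s.powerset, |Ysum b s S| * (Ysum b s S) ^ 2 = C := by
      refine Finset.sum_congr rfl fun S _ => ?_
      rw [← sq_abs]
      ring
    have e2 : ∑ S ∈ s.powerset, |Ysum b s S| ^ 2 = ∑ S ∈ s.powerset, (Ysum b s S) ^ 2 :=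
      Finset.sum_congr rfl fun S _ => sq_abs _
    have e3 : ∑ S ∈ s.powerset, ((Ysum b s S) ^ 2) ^ 2 = ∑ S ∈ s.powerset, (Ysum b s S) ^ 4 :=
      Finset.sum_congr rfl fun S _ => by ring
    rw [e1, e2, e3] at h
    exact h
  have hkey : N ^ 2 * t ≤ 3 * A ^ 2 := by
    have hNt : 0 < N * t := mul_pos hN0 ht0
    have h4 : ((N * t) ^ 2) ^ 2 ≤ (A * C) ^ 2 :=
      pow_le_pow_left₀ (sq_nonneg _) hBC 2
    have h5 : (A * C) ^ 2 ≤ A ^ 2 * ((N * t) * (3 * N * t ^ 2)) := by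
      have : C ^ 2 ≤ (N * t) * (3 * N * t ^ 2) :=
        le_trans hCD (by
          have := mul_le_mul_of_nonneg_left hD (le_of_lt hNt)
          rw [hN] at this ⊢
          calc (2:ℝ) ^ s.card * t * ∑ S ∈ s.powerset, (Ysum b s S) ^ 4
              ≤ 2 ^ s.card * t * (3 * 2 ^ s.card * t ^ 2) := this
            _ = 2 ^ s.card * t * (3 * 2 ^ s.card * t ^ 2) := rfl)
      calc (A * C) ^ 2 = A ^ 2 * C ^ 2 := by ring
        _ ≤ A ^ 2 * ((N * t) * (3 * N * t ^ 2)) :=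
            mul_le_mul_of_nonneg_left this (sq_nonneg _)
    have h6 : N ^ 4 * t ^ 4 ≤ 3 * A ^ 2 * (N ^ 2 * t ^ 3) := by nlinarith [h4, h5]
    nlinarith [h6, mul_pos (mul_pos hN0 hN0) (mul_pos (mul_pos ht0 ht0) ht0)]
  have hsq : (N * Real.sqrt t) ^ 2 ≤ (Real.sqrt 3 * A) ^ 2 := by
    rw [mul_pow, mul_pow, Real.sq_sqrt (le_of_lt ht0), Real.sq_sqrt (by norm_num : (0:ℝ) ≤ 3)]
    exact hkey
  calc N * Real.sqrt t = Real.sqrt ((N * Real.sqrt t) ^ 2) :=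
        (Real.sqrt_sq (by positivity)).symm
    _ ≤ Real.sqrt ((Real.sqrt 3 * A) ^ 2) := Real.sqrt_le_sqrt hsq
    _ = Real.sqrt 3 * A := Real.sqrt_sq (by positivity)


/-- **Remark 3.4, upper estimate (case of c₀).** There is `K ≥ 1` such that for all scalars
`λ_1, …, λ_m` and every finite family `x_1*, …, x_n*` of functionals on `c₀ = C₀(ℕ, ℝ)`
with `sup_{‖x‖≤1} ∑_k |x_k*(x)| ≤ 1`, one has
`∑_k |∑_i λ_i |x_k*(e_i)|| ≤ K (∑_i λ_i^2)^(1/2)`, where `e i` is the canonical `i`-th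
basis vector of `c₀`.  This is the estimate `‖∑ λ_i |δ_{e_i}|‖_{FBL[c₀]} ≤ K (∑ λ_i^2)^(1/2)`
written via the explicit formula for the free Banach lattice norm. -/
theorem fbl_c0_abs_upper :
    ∃ K : ℝ, 1 ≤ K ∧
      ∀ (e : ℕ → ZeroAtInftyContinuousMap ℕ ℝ),
        (∀ i j : ℕ, e i j = if j = i then 1 else 0) →
      ∀ (m : ℕ) (lam : Fin m → ℝ) (n : ℕ)
        (xs : Fin n → (ZeroAtInftyContinuousMap ℕ ℝ →L[ℝ] ℝ)),
        (∀ x, ‖x‖ ≤ 1 → ∑ k, |xs k x| ≤ 1) →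
        ∑ k, abs (∑ i, lam i * |xs k (e (i : ℕ))|) ≤
          K * (∑ i, (lam i) ^ 2) ^ ((1 : ℝ) / 2) := by
  classical
  refine ⟨2, by norm_num, ?_⟩
  intro e he m lam n xs hxs
  set b : Fin n → Fin m → ℝ := fun k i => xs k (e (i : ℕ)) with hb
  -- the coercion of a finite sum of `C₀` functions
  have coe_sum : ∀ (f : Fin m → ZeroAtInftyContinuousMap ℕ ℝ),
      ⇑(∑ i, f i) = ∑ i, ⇑(f i) := by
    intro f
    exact map_sum (AddMonoidHom.mk' (fun g : ZeroAtInftyContinuousMap ℕ ℝ => ⇑g)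
      (fun f g => ZeroAtInftyContinuousMap.coe_add f g)) f Finset.univ
  -- the sign vectors
  set xS : Finset (Fin m) → ZeroAtInftyContinuousMap ℕ ℝ :=
    fun S => ∑ i, (if i ∈ S then (1:ℝ) else -1) • e (i : ℕ) with hxS
  have hxSval : ∀ (S : Finset (Fin m)) (j : ℕ),
      xS S j = ∑ i, (if i ∈ S then (1:ℝ) else -1) * e (i : ℕ) j := by
    intro S j
    rw [hxS]
    simp only [coe_sum, Finset.sum_apply]
    refine Finset.sum_congr rfl fun i _ => ?_
    rw [ZeroAtInftyContinuousMap.coe_smul]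
    simp [smul_eq_mul]
  have hxSnorm : ∀ S : Finset (Fin m), ‖xS S‖ ≤ 1 := by
    intro S
    rw [← ZeroAtInftyContinuousMap.norm_toBCF_eq_norm]
    rw [BoundedContinuousFunction.norm_le zero_le_one]
    intro j
    have hval : xS S j = ∑ i : Fin m, (if (j : ℕ) = (i : ℕ) then (if i ∈ S then (1:ℝ) else -1) else 0) := by
      rw [hxSval S j]
      refine Finset.sum_congr rfl fun i _ => ?_
      rw [he i j]
      by_cases h : j = (i : ℕ) <;> simp [h]
    show ‖xS S j‖ ≤ 1
    rw [Real.norm_eq_abs, hval]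
    by_cases hj : j < m
    · have : ∀ i : Fin m, ((j : ℕ) = (i : ℕ)) ↔ (i = ⟨j, hj⟩) := by
        intro i
        constructor
        · intro h; exact Fin.ext h.symm
        · intro h; rw [h]
      rw [Finset.sum_congr rfl fun i _ => by rw [if_congr (this i) rfl rfl]]
      rw [Finset.sum_ite_eq' Finset.univ (⟨j, hj⟩ : Fin m)
        (fun i => if i ∈ S then (1:ℝ) else -1)]
      simp only [Finset.mem_univ, if_true]
      split_ifs <;> norm_num
    · have : ∀ i : Fin m, ((j : ℕ) = (i : ℕ)) = False := by
        intro i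
        simp only [eq_iff_iff, iff_false]
        intro h
        exact hj (h ▸ i.isLt)
      simp only [this, if_false]
      simp
  -- linearity: the functional applied to a sign vector
  have hlin : ∀ (k : Fin n) (S : Finset (Fin m)),
      xs k (xS S) = Ysum (b k) Finset.univ S := by
    intro k S
    rw [hxS]
    simp only [map_sum, map_smul, smul_eq_mul]
    rfl
  -- the key Khintchine-type estimate summed over k
  have hcard : (Finset.univ : Finset (Fin m)).card = m := by simp
  have hkh : ∀ k : Fin n, (2:ℝ) ^ m * Real.sqrt (∑ i, b k i ^ 2) ≤
      Real.sqrt 3 * ∑ S ∈ (Finset.univ : Finset (Fin m)).powerset, |Ysum (b k) Finset.univ S| := by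
    intro k
    have := khintchine_s4 (b k) (Finset.univ : Finset (Fin m))
    rwa [hcard] at this
  have hST : ∑ S ∈ (Finset.univ : Finset (Fin m)).powerset, ∑ k, |xs k (xS S)| ≤ (2:ℝ) ^ m := by
    calc ∑ S ∈ (Finset.univ : Finset (Fin m)).powerset, ∑ k, |xs k (xS S)|
        ≤ ∑ S ∈ (Finset.univ : Finset (Fin m)).powerset, 1 :=
          Finset.sum_le_sum fun S _ => hxs (xS S) (hxSnorm S)
      _ = ((Finset.univ : Finset (Fin m)).powerset.card : ℝ) := by simp
      _ = (2:ℝ) ^ m := by rw [Finset.card_powerset, hcard]; push_cast; ring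
  have hsum : ∑ k, Real.sqrt (∑ i, b k i ^ 2) ≤ Real.sqrt 3 := by
    have h2m : (0:ℝ) < 2 ^ m := by positivity
    rw [← mul_le_mul_iff_right₀ h2m]
    calc (2:ℝ) ^ m * ∑ k, Real.sqrt (∑ i, b k i ^ 2)
        = ∑ k, (2:ℝ) ^ m * Real.sqrt (∑ i, b k i ^ 2) := Finset.mul_sum _ _ _
      _ ≤ ∑ k, Real.sqrt 3 * ∑ S ∈ (Finset.univ : Finset (Fin m)).powerset,
            |Ysum (b k) Finset.univ S| := Finset.sum_le_sum fun k _ => hkh k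
      _ = Real.sqrt 3 * ∑ k, ∑ S ∈ (Finset.univ : Finset (Fin m)).powerset,
            |Ysum (b k) Finset.univ S| := (Finset.mul_sum _ _ _).symm
      _ = Real.sqrt 3 * ∑ S ∈ (Finset.univ : Finset (Fin m)).powerset, ∑ k,
            |Ysum (b k) Finset.univ S| := by rw [Finset.sum_comm]
      _ = Real.sqrt 3 * ∑ S ∈ (Finset.univ : Finset (Fin m)).powerset, ∑ k,
            |xs k (xS S)| := by
              congr 1
              exact Finset.sum_congr rfl fun S _ => Finset.sum_congr rfl fun k _ => by
                rw [hlin k S]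
      _ ≤ Real.sqrt 3 * 2 ^ m :=
            mul_le_mul_of_nonneg_left hST (Real.sqrt_nonneg 3)
      _ = 2 ^ m * Real.sqrt 3 := by ring
  -- Cauchy–Schwarz in each k
  have hcs : ∀ k : Fin n, abs (∑ i, lam i * |b k i|) ≤
      Real.sqrt (∑ i, lam i ^ 2) * Real.sqrt (∑ i, b k i ^ 2) := by
    intro k
    have h := Finset.sum_mul_sq_le_sq_mul_sq Finset.univ lam (fun i => |b k i|)
    have e2 : ∑ i, |b k i| ^ 2 = ∑ i, b k i ^ 2 :=
      Finset.sum_congr rfl fun i _ => sq_abs _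
    rw [e2] at h
    calc abs (∑ i, lam i * |b k i|) = Real.sqrt ((∑ i, lam i * |b k i|) ^ 2) :=
          (Real.sqrt_sq_eq_abs _).symm
      _ ≤ Real.sqrt ((∑ i, lam i ^ 2) * ∑ i, b k i ^ 2) := Real.sqrt_le_sqrt h
      _ = Real.sqrt (∑ i, lam i ^ 2) * Real.sqrt (∑ i, b k i ^ 2) :=
          Real.sqrt_mul (Finset.sum_nonneg fun i _ => sq_nonneg _) _
  have h3le2 : Real.sqrt 3 ≤ 2 := by
    nlinarith [Real.sq_sqrt (by norm_num : (0:ℝ) ≤ 3), Real.sqrt_nonneg 3]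
  have hL0 : 0 ≤ Real.sqrt (∑ i, lam i ^ 2) := Real.sqrt_nonneg _
  calc ∑ k, abs (∑ i, lam i * |xs k (e (i : ℕ))|)
      = ∑ k, abs (∑ i, lam i * |b k i|) := rfl
    _ ≤ ∑ k, Real.sqrt (∑ i, lam i ^ 2) * Real.sqrt (∑ i, b k i ^ 2) :=
        Finset.sum_le_sum fun k _ => hcs k
    _ = Real.sqrt (∑ i, lam i ^ 2) * ∑ k, Real.sqrt (∑ i, b k i ^ 2) :=
        (Finset.mul_sum _ _ _).symm
    _ ≤ Real.sqrt (∑ i, lam i ^ 2) * Real.sqrt 3 :=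
        mul_le_mul_of_nonneg_left hsum hL0
    _ ≤ Real.sqrt (∑ i, lam i ^ 2) * 2 := mul_le_mul_of_nonneg_left h3le2 hL0
    _ = 2 * (∑ i, lam i ^ 2) ^ ((1:ℝ) / 2) := by
        rw [← Real.sqrt_eq_rpow]; ring
end

section
/- For every m ∈ ℕ and all nonnegative real scalars λ_1, …, λ_m, there exist n ∈ ℕ and continuous linear functionals x_1*, …, x_n* on c_0 such that sup_{‖x‖ ≤ 1} ∑_{k=1}^n |x_k*(x)| ≤ 1 and ∑_{k=1}^n ∑_{i=1}^m λ_i |x_k*(e_i)| ≥ (∑_{i=1}^m λ_i^2)^{1/2}. -/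
open Finset

noncomputable def myEv (j : ℕ) : ZeroAtInftyContinuousMap ℕ ℝ →L[ℝ] ℝ :=
  LinearMap.mkContinuous
    { toFun := fun x => x j
      map_add' := fun x y => rfl
      map_smul' := fun c x => rfl } 1
    (fun x => by
      simpa using (x.toBCF.norm_coe_le_norm j).trans
        (le_of_eq x.norm_toBCF_eq_norm))

@[simp] lemma myEv_apply (j : ℕ) (x : ZeroAtInftyContinuousMap ℕ ℝ) : myEv j x = x j := rfl

noncomputable def sgn (b : Bool) : ℝ := if b then 1 else -1

@[simp] lemma abs_sgn (b : Bool) : |sgn b| = 1 := by cases b <;> simp [sgn]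
@[simp] lemma sq_sgn (b : Bool) : sgn b ^ 2 = 1 := by cases b <;> simp [sgn]

lemma sgn_orth {m : ℕ} {i j : Fin m} (hij : i ≠ j) :
    ∑ ε : Fin m → Bool, sgn (ε i) * sgn (ε j) = 0 := by
  refine Finset.sum_ninvolution (fun ε => Function.update ε j (!ε j)) ?_ ?_ (fun _ => mem_univ _) ?_
  · intro ε
    simp [Function.update_of_ne hij, Function.update_self]
    cases ε i <;> cases ε j <;> simp [sgn]
  · intro ε h
    intro hc
    have := congrFun hc j
    simp at this
  · intro ε
    funext k
    by_cases hk : k = j <;> simp [hk, Function.update_self, Function.update_of_ne]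

lemma sq_sum_sgn {m : ℕ} (a : Fin m → ℝ) :
    ∑ ε : Fin m → Bool, (∑ i, sgn (ε i) * a i) ^ 2 = 2 ^ m * ∑ i, a i ^ 2 := by
  have h : ∀ ε : Fin m → Bool, (∑ i, sgn (ε i) * a i) ^ 2
      = ∑ i, ∑ j, (sgn (ε i) * a i) * (sgn (ε j) * a j) := by
    intro ε; rw [sq, Finset.sum_mul_sum]
  simp_rw [h]
  rw [Finset.sum_comm]
  have : ∀ i : Fin m, ∑ ε : Fin m → Bool, ∑ j, (sgn (ε i) * a i) * (sgn (ε j) * a j)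
      = 2 ^ m * a i ^ 2 := by
    intro i
    rw [Finset.sum_comm]
    have hdiag : ∀ j : Fin m, ∑ ε : Fin m → Bool, (sgn (ε i) * a i) * (sgn (ε j) * a j)
        = if j = i then 2 ^ m * a i ^ 2 else 0 := by
      intro j
      by_cases hj : j = i
      · subst hj
        have : ∀ ε : Fin m → Bool, (sgn (ε j) * a j) * (sgn (ε j) * a j) = a j ^ 2 := by
          intro ε; cases (ε j) <;> simp [sgn] <;> ring
        simp only [this, Finset.sum_const, nsmul_eq_mul, if_pos rfl]
        simp [Fintype.card_fun, mul_comm]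
      · have : ∀ ε : Fin m → Bool, (sgn (ε i) * a i) * (sgn (ε j) * a j)
            = (sgn (ε i) * sgn (ε j)) * (a i * a j) := by intro ε; ring
        simp only [this, ← Finset.sum_mul, sgn_orth (Ne.symm hj), zero_mul, if_neg hj]
    simp [hdiag]
  simp [this]
  rw [Finset.mul_sum]

lemma l1_sum_sgn {m : ℕ} (a : Fin m → ℝ) :
    ∑ ε : Fin m → Bool, |∑ i, sgn (ε i) * a i| ≤ 2 ^ m * Real.sqrt (∑ i, a i ^ 2) := by
  have hcs := Finset.sum_mul_sq_le_sq_mul_sq Finset.univ (fun _ : Fin m → Bool => (1 : ℝ))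
    (fun ε => |∑ i, sgn (ε i) * a i|)
  simp only [one_mul, one_pow, sq_abs, Finset.sum_const, nsmul_eq_mul, mul_one] at hcs
  rw [sq_sum_sgn] at hcs
  have hcard : (Fintype.card (Fin m → Bool) : ℝ) = 2 ^ m := by
    simp [Fintype.card_fun]
  rw [Finset.card_univ] at hcs
  rw [hcard] at hcs
  have hnn : (0 : ℝ) ≤ ∑ ε : Fin m → Bool, |∑ i, sgn (ε i) * a i| :=
    Finset.sum_nonneg fun _ _ => abs_nonneg _
  have hT : (0:ℝ) ≤ ∑ i, a i ^ 2 := Finset.sum_nonneg fun i _ => sq_nonneg (a i)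
  calc ∑ ε : Fin m → Bool, |∑ i, sgn (ε i) * a i|
      = Real.sqrt ((∑ ε : Fin m → Bool, |∑ i, sgn (ε i) * a i|) ^ 2) :=
        (Real.sqrt_sq hnn).symm
    _ ≤ Real.sqrt ((2 ^ m) ^ 2 * ∑ i, a i ^ 2) := by
        apply Real.sqrt_le_sqrt
        calc (∑ ε : Fin m → Bool, |∑ i, sgn (ε i) * a i|) ^ 2
            ≤ 2 ^ m * (2 ^ m * ∑ i, a i ^ 2) := hcs
          _ = (2 ^ m) ^ 2 * ∑ i, a i ^ 2 := by ring
    _ = 2 ^ m * Real.sqrt (∑ i, a i ^ 2) := by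
        rw [Real.sqrt_mul (by positivity), Real.sqrt_sq (by positivity)]

/-- **Remark 3.4, lower estimate (case of c₀).** For every `m` nonnegative scalars
`λ_1, …, λ_m`, there exist functionals `x_1*, …, x_n*` on `c₀ = C₀(ℕ, ℝ)` with
`sup_{‖x‖≤1} ∑_k |x_k*(x)| ≤ 1` and `∑_k ∑_i λ_i |x_k*(e_i)| ≥ (∑_i λ_i^2)^(1/2)`,
where `e i` is the canonical `i`-th basis vector of `c₀`.  This witnesses the estimate
`‖∑ λ_i |δ_{e_i}|‖_{FBL[c₀]} ≥ (∑ λ_i^2)^(1/2)` via the explicit formula for the free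
Banach lattice norm. -/
theorem fbl_c0_abs_lower
    (e : ℕ → ZeroAtInftyContinuousMap ℕ ℝ)
    (he : ∀ i j : ℕ, e i j = if j = i then 1 else 0)
    (m : ℕ) (lam : Fin m → ℝ) (hlam : ∀ i, 0 ≤ lam i) :
    ∃ (n : ℕ) (xs : Fin n → (ZeroAtInftyContinuousMap ℕ ℝ →L[ℝ] ℝ)),
      (∀ x, ‖x‖ ≤ 1 → ∑ k, |xs k x| ≤ 1) ∧
      (∑ i, (lam i) ^ 2) ^ ((1 : ℝ) / 2) ≤
        ∑ k, ∑ i, lam i * |xs k (e (i : ℕ))| := by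
  rw [← Real.sqrt_eq_rpow]
  by_cases hz : ∑ i, (lam i) ^ 2 = 0
  · refine ⟨0, Fin.elim0, fun x _ => by simp, ?_⟩
    simp [hz]
  have hT : (0:ℝ) ≤ ∑ i, lam i ^ 2 := Finset.sum_nonneg fun i _ => sq_nonneg (lam i)
  set s : ℝ := Real.sqrt (∑ i, lam i ^ 2) with hs
  have hspos : 0 < s := Real.sqrt_pos.2 (lt_of_le_of_ne hT (Ne.symm hz))
  set μ : Fin m → ℝ := fun i => lam i / s with hμ
  -- the functionals, indexed by sign patterns
  set F : (Fin m → Bool) → (ZeroAtInftyContinuousMap ℕ ℝ →L[ℝ] ℝ) :=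
    fun ε => ((2:ℝ) ^ m)⁻¹ • ∑ i : Fin m, (sgn (ε i) * μ i) • myEv (i : ℕ) with hF
  have hFapp : ∀ (ε : Fin m → Bool) (x : ZeroAtInftyContinuousMap ℕ ℝ),
      F ε x = ((2:ℝ) ^ m)⁻¹ * ∑ i : Fin m, sgn (ε i) * μ i * x (i : ℕ) := by
    intro ε x
    simp [hF, ContinuousLinearMap.sum_apply, smul_eq_mul]
  set N := Fintype.card (Fin m → Bool) with hN
  set E : Fin N ≃ (Fin m → Bool) := (Fintype.equivFin (Fin m → Bool)).symm with hE
  refine ⟨N, fun k => F (E k), ?_, ?_⟩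
  · intro x hx
    have h1 : ∑ k : Fin N, |F (E k) x| = ∑ ε : Fin m → Bool, |F ε x| :=
      Equiv.sum_comp E (fun ε => |F ε x|)
    rw [h1]
    have hxi : ∀ j : ℕ, |x j| ≤ 1 := by
      intro j
      exact le_trans (le_trans (by simpa using x.toBCF.norm_coe_le_norm j)
        (le_of_eq x.norm_toBCF_eq_norm)) hx
    have key := l1_sum_sgn (fun i : Fin m => μ i * x (i : ℕ))
    have h2 : ∀ ε : Fin m → Bool, |F ε x|
        = ((2:ℝ) ^ m)⁻¹ * |∑ i : Fin m, sgn (ε i) * (μ i * x (i : ℕ))| := by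
      intro ε
      rw [hFapp, abs_mul, abs_inv, abs_pow, abs_two]
      ring_nf
    simp_rw [h2]
    rw [← Finset.mul_sum]
    have hb : ∑ i : Fin m, (μ i * x (i : ℕ)) ^ 2 ≤ ∑ i : Fin m, μ i ^ 2 := by
      apply Finset.sum_le_sum
      intro i _
      have hx1 := hxi (i : ℕ)
      have hx2 : x (i : ℕ) ^ 2 ≤ 1 := by
        nlinarith [sq_abs (x (i : ℕ)), abs_nonneg (x (i : ℕ))]
      calc (μ i * x (i : ℕ)) ^ 2 = μ i ^ 2 * x (i : ℕ) ^ 2 := by ring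
        _ ≤ μ i ^ 2 * 1 := mul_le_mul_of_nonneg_left hx2 (sq_nonneg _)
        _ = μ i ^ 2 := mul_one _
    have hμ1 : ∑ i : Fin m, μ i ^ 2 = 1 := by
      simp only [hμ, div_pow, ← Finset.sum_div]
      rw [Real.sq_sqrt hT, div_self hz]
    calc ((2:ℝ) ^ m)⁻¹ * ∑ ε : Fin m → Bool, |∑ i : Fin m, sgn (ε i) * (μ i * x (i : ℕ))|
        ≤ ((2:ℝ) ^ m)⁻¹ * (2 ^ m * Real.sqrt (∑ i : Fin m, (μ i * x (i : ℕ)) ^ 2)) := by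
          apply mul_le_mul_of_nonneg_left key (by positivity)
      _ ≤ ((2:ℝ) ^ m)⁻¹ * (2 ^ m * Real.sqrt (∑ i : Fin m, μ i ^ 2)) := by
          apply mul_le_mul_of_nonneg_left _ (by positivity)
          apply mul_le_mul_of_nonneg_left (Real.sqrt_le_sqrt hb) (by positivity)
      _ = 1 := by
          rw [hμ1, Real.sqrt_one]
          field_simp
  · -- value on basis vectors
    have hFei : ∀ (ε : Fin m → Bool) (i : Fin m), F ε (e (i : ℕ)) = ((2:ℝ) ^ m)⁻¹ * (sgn (ε i) * μ i) := by
      intro ε i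
      rw [hFapp]
      congr 1
      rw [Finset.sum_eq_single i]
      · simp [he]
      · intro j _ hj
        have : e (i : ℕ) (j : ℕ) = 0 := by
          rw [he]
          simp [Fin.val_eq_val, hj]
        rw [this, mul_zero]
      · simp
    have h1 : ∑ k : Fin N, ∑ i : Fin m, lam i * |F (E k) (e (i : ℕ))|
        = ∑ ε : Fin m → Bool, ∑ i : Fin m, lam i * |F ε (e (i : ℕ))| :=
      Equiv.sum_comp E (fun ε => ∑ i : Fin m, lam i * |F ε (e (i : ℕ))|)
    rw [h1]
    have h2 : ∀ ε : Fin m → Bool, ∑ i : Fin m, lam i * |F ε (e (i : ℕ))|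
        = ((2:ℝ) ^ m)⁻¹ * ∑ i : Fin m, lam i * μ i := by
      intro ε
      rw [Finset.mul_sum]
      apply Finset.sum_congr rfl
      intro i _
      rw [hFei]
      rw [abs_mul, abs_mul, abs_sgn, abs_inv, abs_pow, abs_two,
        abs_of_nonneg (div_nonneg (hlam i) hspos.le)]
      ring
    simp_rw [h2]
    rw [Finset.sum_const, Finset.card_univ, nsmul_eq_mul]
    have hNc : (N : ℝ) = 2 ^ m := by simp [hN, Fintype.card_fun]
    rw [hNc]
    have hsum : ∑ i : Fin m, lam i * μ i = s := by
      have h3 : ∀ i : Fin m, lam i * (lam i / s) = lam i ^ 2 / s := fun i => by ring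
      simp only [hμ, h3, ← Finset.sum_div]
      rw [hs, Real.div_sqrt]
    rw [hsum]
    rw [← mul_assoc, mul_inv_cancel₀ (by positivity), one_mul]
end

section
/- Let 2 < p < ∞ be real and set s = 2p/(p−2). Let m ∈ ℕ, let W be an m × m real matrix with all entries in {−1, 1} whose columns are pairwise orthogonal, and let b_1, …, b_m be nonnegative reals with ∑_{i=1}^m b_i^s ≤ 1. Then for every x ∈ ℓ_p with ‖x‖ ≤ 1, one has ∑_{j=1}^m | (1/m) ∑_{i=1}^m b_i W_{i j} x_i | ≤ 1. -/
open scoped Matrix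


/-- **The dual-family estimate in Theorem 3.3 (ℓ_p case).** Let `2 < p < ∞`,
`s = 2p/(p-2)` (the Hölder conjugate of `r = 2p/(p+2)`), `W` an `m × m` matrix with
entries in `{-1, 1}` and pairwise orthogonal columns, and `b_1, …, b_m ≥ 0` with
`∑ b_i^s ≤ 1`.  Then for every `x ∈ ℓ_p` with `‖x‖ ≤ 1`,
`∑_j |(1/m) ∑_i b_i W i j x_i| ≤ 1`. -/
theorem fbl_lp_dual_family_estimate (p : ℝ) (hp : 2 < p) (s : ℝ) (hs : s = 2 * p / (p - 2))
    [Fact (1 ≤ ENNReal.ofReal p)]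
    (m : ℕ) (W : Matrix (Fin m) (Fin m) ℝ)
    (hW : ∀ i j, W i j = 1 ∨ W i j = -1)
    (horth : ∀ j l, j ≠ l → ∑ i, W i j * W i l = 0)
    (b : Fin m → ℝ) (hb : ∀ i, 0 ≤ b i) (hbs : ∑ i, b i ^ s ≤ 1)
    (x : lp (fun _ : ℕ => ℝ) (ENNReal.ofReal p)) (hx : ‖x‖ ≤ 1) :
    ∑ j, abs ((1 / (m : ℝ)) * ∑ i, b i * W i j * x (i : ℕ)) ≤ 1 := by
  rcases Nat.eq_zero_or_pos m with hm | hm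
  · subst hm; simp
  have hm0 : (0:ℝ) < (m:ℝ) := by exact_mod_cast hm
  have hm0' : (m:ℝ) ≠ 0 := ne_of_gt hm0
  have hp2 : (0:ℝ) < p - 2 := by linarith
  have hp0 : (0:ℝ) < p := by linarith
  set y : Fin m → ℝ := fun i => b i * x (i : ℕ) with hy
  -- Column orthogonality gives Wᵀ * W = m • 1
  have hWtW : Wᵀ * W = (m:ℝ) • 1 := by
    ext j l
    by_cases hjl : j = l
    · subst hjl
      have h1 : ∀ i, W i j * W i j = 1 := fun i => by
        rcases hW i j with h | h <;> rw [h] <;> ring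
      simp [Matrix.mul_apply, Matrix.transpose_apply, h1]
    · simp [Matrix.mul_apply, Matrix.transpose_apply, horth j l hjl,
        Matrix.one_apply_ne hjl, hjl]
  -- hence W * Wᵀ = m • 1
  have hWWt : W * Wᵀ = (m:ℝ) • 1 := by
    have h1 : (((m:ℝ)⁻¹) • Wᵀ) * W = 1 := by
      rw [Matrix.smul_mul, hWtW, smul_smul, inv_mul_cancel₀ hm0', one_smul]
    have h2 : W * (((m:ℝ)⁻¹) • Wᵀ) = 1 := mul_eq_one_comm.mp h1
    calc W * Wᵀ = (m:ℝ) • (W * (((m:ℝ)⁻¹) • Wᵀ)) := by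
          rw [Matrix.mul_smul, smul_smul, mul_inv_cancel₀ hm0', one_smul]
      _ = (m:ℝ) • 1 := by rw [h2]
  have hrow : ∀ i k, ∑ j, W i j * W k j = if i = k then (m:ℝ) else 0 := by
    intro i k
    have := congrFun (congrFun hWWt i) k
    simpa [Matrix.mul_apply, Matrix.transpose_apply, Matrix.one_apply] using this
  -- key quadratic identity
  have hsq : ∑ j, (∑ i, W i j * y i) ^ 2 = (m:ℝ) * ∑ i, y i ^ 2 := by
    calc ∑ j, (∑ i, W i j * y i) ^ 2
        = ∑ j, ∑ i, ∑ k, (W i j * W k j) * (y i * y k) := by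
          refine Finset.sum_congr rfl fun j _ => ?_
          rw [sq, Finset.sum_mul_sum]
          exact Finset.sum_congr rfl fun i _ =>
            Finset.sum_congr rfl fun k _ => by ring
      _ = ∑ i, ∑ k, (∑ j, W i j * W k j) * (y i * y k) := by
          rw [Finset.sum_comm]
          refine Finset.sum_congr rfl fun i _ => ?_
          rw [Finset.sum_comm]
          exact Finset.sum_congr rfl fun k _ => (Finset.sum_mul ..).symm
      _ = ∑ i, (m:ℝ) * (y i ^ 2) := by
          refine Finset.sum_congr rfl fun i _ => ?_
          simp only [hrow, ite_mul, zero_mul]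
          rw [Finset.sum_ite_eq Finset.univ i (fun k => (m:ℝ) * (y i * y k))]
          simp [sq]
      _ = (m:ℝ) * ∑ i, y i ^ 2 := by rw [Finset.mul_sum]
  -- Hölder: ∑ y² ≤ 1
  have hse : s / 2 = p / (p - 2) := by rw [hs]; field_simp
  have hs0 : 0 < s := by rw [hs]; exact div_pos (by linarith) hp2
  have hconj : (s / 2).HolderConjugate (p / 2) := by
    constructor
    · rw [hse, inv_div, inv_div, inv_one, ← add_div, sub_add_cancel, div_self hp0.ne']
    · linarith
    · linarith
  have hxsum : ∑ i : Fin m, |x (i : ℕ)| ^ p ≤ 1 := by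
    have h1 : ∑ i : Fin m, |x (i : ℕ)| ^ p
        = ∑ i ∈ Finset.range m, ‖x i‖ ^ (ENNReal.ofReal p).toReal := by
      rw [Fin.sum_univ_eq_sum_range (fun i => |x i| ^ p)]
      simp [Real.norm_eq_abs, ENNReal.toReal_ofReal hp0.le]
    rw [h1]
    refine le_trans (lp.sum_rpow_le_norm_rpow ?_ x (Finset.range m)) ?_
    · rw [ENNReal.toReal_ofReal hp0.le]; exact hp0
    · rw [ENNReal.toReal_ofReal hp0.le]
      exact Real.rpow_le_one (norm_nonneg _) hx hp0.le
  have hy2 : ∑ i, y i ^ 2 ≤ 1 := by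
    have hH := Real.inner_le_Lp_mul_Lq_of_nonneg (Finset.univ (α := Fin m)) hconj
      (f := fun i => b i ^ (2:ℝ)) (g := fun i => |x (i : ℕ)| ^ (2:ℝ))
      (fun i _ => Real.rpow_nonneg (hb i) _)
      (fun i _ => Real.rpow_nonneg (abs_nonneg _) _)
    have hfe : ∀ i : Fin m, (b i ^ (2:ℝ)) ^ (s / 2) = b i ^ s := by
      intro i
      rw [← Real.rpow_mul (hb i)]
      congr 1
      ring
    have hge : ∀ i : Fin m, (|x (i : ℕ)| ^ (2:ℝ)) ^ (p / 2) = |x (i : ℕ)| ^ p := by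
      intro i
      rw [← Real.rpow_mul (abs_nonneg _)]
      congr 1
      ring
    have hyeq : ∀ i : Fin m, y i ^ 2 = b i ^ (2:ℝ) * |x (i : ℕ)| ^ (2:ℝ) := by
      intro i
      rw [Real.rpow_two, Real.rpow_two, hy]
      simp [mul_pow, sq_abs]
    simp only [hfe, hge] at hH
    calc ∑ i, y i ^ 2 = ∑ i, b i ^ (2:ℝ) * |x (i : ℕ)| ^ (2:ℝ) :=
          Finset.sum_congr rfl fun i _ => hyeq i
      _ ≤ (∑ i : Fin m, b i ^ s) ^ (1 / (s/2)) *
            (∑ i : Fin m, |x (i : ℕ)| ^ p) ^ (1 / (p/2)) := hH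
      _ ≤ 1 := by
          have h1 : (∑ i : Fin m, b i ^ s) ^ (1 / (s/2)) ≤ 1 :=
            Real.rpow_le_one (Finset.sum_nonneg fun i _ => Real.rpow_nonneg (hb i) _)
              hbs (by positivity)
          have h2 : (∑ i : Fin m, |x (i : ℕ)| ^ p) ^ (1 / (p/2)) ≤ 1 :=
            Real.rpow_le_one (Finset.sum_nonneg fun i _ => Real.rpow_nonneg (abs_nonneg _) _)
              hxsum (by positivity)
          calc (∑ i : Fin m, b i ^ s) ^ (1 / (s/2)) *
                (∑ i : Fin m, |x (i : ℕ)| ^ p) ^ (1 / (p/2))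
              ≤ 1 * 1 := mul_le_mul h1 h2 (Real.rpow_nonneg
                (Finset.sum_nonneg fun i _ => Real.rpow_nonneg (abs_nonneg _) _) _) zero_le_one
            _ = 1 := by ring
  -- Cauchy–Schwarz, final step
  set c : Fin m → ℝ := fun j => (1 / (m:ℝ)) * ∑ i, W i j * y i with hc
  have hceq : ∀ j, (1 / (m : ℝ)) * ∑ i, b i * W i j * x (i : ℕ) = c j := by
    intro j
    rw [hc]
    congr 1
    exact Finset.sum_congr rfl fun i _ => by rw [hy]; ring
  have hcsq : (m:ℝ) * ∑ j, c j ^ 2 ≤ 1 := by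
    have : ∑ j, c j ^ 2 = (1 / (m:ℝ)) * ∑ i, y i ^ 2 := by
      simp only [hc, mul_pow, ← Finset.mul_sum, hsq]
      field_simp
    rw [this]
    calc (m:ℝ) * ((1 / (m:ℝ)) * ∑ i, y i ^ 2) = ∑ i, y i ^ 2 := by field_simp
      _ ≤ 1 := hy2
  have hCS : (∑ j, |c j|) ^ 2 ≤ (m:ℝ) * ∑ j, c j ^ 2 := by
    have := Finset.sum_mul_sq_le_sq_mul_sq Finset.univ (fun _ : Fin m => (1:ℝ)) (fun j => |c j|)
    simpa [sq_abs, Finset.card_univ] using this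
  have hnn : 0 ≤ ∑ j, |c j| := Finset.sum_nonneg fun j _ => abs_nonneg _
  have hfin : (∑ j, |c j|) ^ 2 ≤ 1 := le_trans hCS hcsq
  calc ∑ j, |(1 / (m : ℝ)) * ∑ i, b i * W i j * x (i : ℕ)|
      = ∑ j, |c j| := Finset.sum_congr rfl fun j _ => by rw [hceq j]
    _ ≤ 1 := by nlinarith
end

section
/- Let m ∈ ℕ, let W be an m × m real matrix with all entries in {−1, 1} whose columns are pairwise orthogonal, and let b_1, …, b_m be nonnegative reals with ∑_{i=1}^m b_i^2 ≤ 1. Then for all real numbers x_1, …, x_m with |x_i| ≤ 1 for every i, one has ∑_{j=1}^m | (1/m) ∑_{i=1}^m b_i W_{i j} x_i | ≤ 1. -/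
/-- **The dual-family estimate in Remark 3.4 (c₀ case).** Let `W` be an `m × m` matrix with
entries in `{-1, 1}` and pairwise orthogonal columns, and `b_1, …, b_m ≥ 0` with
`∑ b_i^2 ≤ 1`.  Then for all reals `x_1, …, x_m` with `|x_i| ≤ 1`,
`∑_j |(1/m) ∑_i b_i W i j x_i| ≤ 1`. -/
theorem fbl_c0_dual_family_estimate
    (m : ℕ) (W : Matrix (Fin m) (Fin m) ℝ)
    (hW : ∀ i j, W i j = 1 ∨ W i j = -1)
    (horth : ∀ j l, j ≠ l → ∑ i, W i j * W i l = 0)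
    (b : Fin m → ℝ) (hb : ∀ i, 0 ≤ b i) (hb2 : ∑ i, b i ^ 2 ≤ 1)
    (x : Fin m → ℝ) (hx : ∀ i, |x i| ≤ 1) :
    ∑ j, abs ((1 / (m : ℝ)) * ∑ i, b i * W i j * x i) ≤ 1 := by
  rcases Nat.eq_zero_or_pos m with hm | hm
  · subst hm; simp
  have hm0 : (m : ℝ) ≠ 0 := Nat.cast_ne_zero.mpr hm.ne'
  -- WᵀW = m • 1
  have h1 : W.transpose * W = (m : ℝ) • 1 := by
    ext j l
    by_cases h : j = l
    · subst h
      simp [Matrix.mul_apply, Matrix.transpose_apply, Matrix.one_apply]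
      have : ∀ i, W i j * W i j = 1 := fun i => by rcases hW i j with h | h <;> rw [h] <;> ring
      rw [Finset.sum_congr rfl fun i _ => this i]
      simp
    · simp [Matrix.mul_apply, Matrix.transpose_apply, Matrix.one_apply, h, horth j l h]
  have h2 : ((m : ℝ)⁻¹ • W.transpose) * W = 1 := by
    rw [Matrix.smul_mul, h1, smul_smul, inv_mul_cancel₀ hm0, one_smul]
  have h3 : W * W.transpose = (m : ℝ) • 1 := by
    have := mul_eq_one_comm.mp h2
    rw [Matrix.mul_smul] at this
    have := congrArg (fun M => (m : ℝ) • M) this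
    simpa [smul_smul, mul_inv_cancel₀ hm0] using this
  have hrow : ∀ i k : Fin m, ∑ j, W i j * W k j = if i = k then (m : ℝ) else 0 := by
    intro i k
    have := congrFun (congrFun h3 i) k
    simpa [Matrix.mul_apply, Matrix.transpose_apply, Matrix.one_apply, Matrix.smul_apply,
      mul_comm] using this
  set a : Fin m → ℝ := fun i => b i * x i with ha
  have key : ∑ j, (∑ i, b i * W i j * x i) ^ 2 = (m : ℝ) * ∑ i, a i ^ 2 := by
    have h4 : ∀ j, (∑ i, b i * W i j * x i) = ∑ i, a i * W i j := by
      intro j; apply Finset.sum_congr rfl; intro i _; ring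
    calc ∑ j, (∑ i, b i * W i j * x i) ^ 2
        = ∑ j, ∑ i, ∑ k, (a i * a k) * (W i j * W k j) := by
          apply Finset.sum_congr rfl; intro j _
          rw [h4, sq, Finset.sum_mul_sum]
          apply Finset.sum_congr rfl; intro i _
          apply Finset.sum_congr rfl; intro k _; ring
      _ = ∑ i, ∑ k, (a i * a k) * ∑ j, W i j * W k j := by
          rw [Finset.sum_comm]
          apply Finset.sum_congr rfl; intro i _
          rw [Finset.sum_comm]
          apply Finset.sum_congr rfl; intro k _
          rw [Finset.mul_sum]
      _ = (m : ℝ) * ∑ i, a i ^ 2 := by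
          rw [Finset.mul_sum]
          apply Finset.sum_congr rfl; intro i _
          rw [Finset.sum_eq_single i]
          · rw [hrow i i]; simp; ring
          · intro k _ hk; rw [hrow i k, if_neg (Ne.symm hk)]; ring
          · intro h; exact absurd (Finset.mem_univ i) h
  have ha2 : ∑ i, a i ^ 2 ≤ 1 := by
    refine le_trans (Finset.sum_le_sum fun i _ => ?_) hb2
    have hxi := hx i
    have := abs_nonneg (x i)
    have hbi := hb i
    have hx2 : x i ^ 2 ≤ 1 := by nlinarith [sq_abs (x i), abs_nonneg (x i)]
    have : (b i * x i) ^ 2 ≤ b i ^ 2 * 1 := by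
      rw [mul_pow]; exact mul_le_mul_of_nonneg_left hx2 (sq_nonneg _)
    simpa using this
  -- Cauchy-Schwarz
  set c : Fin m → ℝ := fun j => |(1 / (m : ℝ)) * ∑ i, b i * W i j * x i| with hc
  have cs : (∑ j, c j) ^ 2 ≤ (m : ℝ) * ∑ j, c j ^ 2 := by
    have := sq_sum_le_card_mul_sum_sq (s := (Finset.univ : Finset (Fin m))) (f := c)
    simpa using this
  have hcsq : ∑ j, c j ^ 2 ≤ 1 / (m : ℝ) := by
    have : ∑ j, c j ^ 2 = (1 / (m : ℝ)) ^ 2 * ∑ j, (∑ i, b i * W i j * x i) ^ 2 := by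
      rw [Finset.mul_sum]
      apply Finset.sum_congr rfl; intro j _
      rw [hc, sq_abs, mul_pow]
    rw [this, key]
    have hmpos : (0 : ℝ) < m := by exact_mod_cast hm
    have heq : (1/(m:ℝ))^2 * ((m:ℝ) * ∑ i, a i ^ 2) = (∑ i, a i ^ 2) / m := by
      field_simp
    rw [heq]
    gcongr
  have hcnn : 0 ≤ ∑ j, c j := Finset.sum_nonneg fun j _ => abs_nonneg _
  have hfin : (∑ j, c j) ^ 2 ≤ 1 := by
    calc (∑ j, c j) ^ 2 ≤ (m : ℝ) * ∑ j, c j ^ 2 := cs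
      _ ≤ (m : ℝ) * (1 / m) := by
          have hmpos : (0 : ℝ) < m := by exact_mod_cast hm
          exact mul_le_mul_of_nonneg_left hcsq (le_of_lt hmpos)
      _ = 1 := by field_simp
  nlinarith [hfin, hcnn]
end
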